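/- arXiv:1702.00671 — 7 statements merged into one kernel-verified Lean document; each statement's English description precedes it below -/
import Mathlib

section
/- Let A ∈ ℂ^{n×n}, let v_1, …, v_{k+1} ∈ ℂ^n, let H_k ∈ ℂ^{k×k} be upper Hessenberg, and let h_{k+1,k} ∈ ℂ, such that A·V_k = V_k·H_k + h_{k+1,k}·v_{k+1}·e_k^*, where V_k = [v_1, …, v_k]. Then for every polynomial p with deg p < k one has p(A)·v_1 = V_k·p(H_k)·e_1. -/
open Polynomial Matrix Finset

lemma sum_mulVec_aux {m' n' : Type*} [Fintype n'] (s : Finset ℕ)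
    (f : ℕ → Matrix m' n' ℂ) (w : n' → ℂ) :
    (∑ i ∈ s, f i) *ᵥ w = ∑ i ∈ s, f i *ᵥ w := by
  classical
  induction s using Finset.induction with
  | empty => simp [Matrix.zero_mulVec]
  | insert a s h ih => simp [Finset.sum_insert h, Matrix.add_mulVec, ih]

lemma mulVec_sum_aux {m' n' : Type*} [Fintype n'] (s : Finset ℕ)
    (M : Matrix m' n' ℂ) (w : ℕ → n' → ℂ) :
    M *ᵥ (∑ i ∈ s, w i) = ∑ i ∈ s, M *ᵥ w i := by
  classical
  induction s using Finset.induction with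
  | empty => simp [Matrix.mulVec_zero]
  | insert a s h ih => simp [Finset.sum_insert h, Matrix.mulVec_add, ih]

/-- If `A V_k = V_k H_k + h_{k+1,k} v_{k+1} e_k^*` with `H_k` upper
Hessenberg (no orthonormality assumed), then `p(A) v₁ = V_k p(H_k) e₁` for every
polynomial `p` of degree `< k`.  (`0`-based: the columns of `V` are `v 0, …, v (k-1)`,
and `v k` is the paper's `v_{k+1}`.) -/
theorem stmt2 (n k : ℕ) (hk : 1 ≤ k)
    (A : Matrix (Fin n) (Fin n) ℂ) (v : ℕ → Fin n → ℂ)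
    (Hk : Matrix (Fin k) (Fin k) ℂ)
    (hHess : ∀ i j : Fin k, (j : ℕ) + 1 < (i : ℕ) → Hk i j = 0)
    (h1 : ℂ)
    (V : Matrix (Fin n) (Fin k) ℂ) (hV : V = Matrix.of fun (i : Fin n) (j : Fin k) => v (j : ℕ) i)
    (hrel : A * V =
      V * Hk + h1 • Matrix.of fun i (j : Fin k) => v k i * (if (j : ℕ) = k - 1 then 1 else 0)) :
    ∀ p : Polynomial ℂ, p.natDegree < k →
      (Polynomial.aeval A p).mulVec (v 0) =
        V.mulVec ((Polynomial.aeval Hk p).mulVec (Pi.single (⟨0, hk⟩ : Fin k) 1)) := by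
  classical
  set e1 : Fin k → ℂ := Pi.single (⟨0, hk⟩ : Fin k) 1 with he1
  -- powers of a Hessenberg matrix
  have hpow : ∀ (m : ℕ) (i j : Fin k), (j : ℕ) + m < (i : ℕ) → (Hk ^ m) i j = 0 := by
    intro m
    induction m with
    | zero =>
      intro i j h
      have hij : i ≠ j := fun hij => by subst hij; omega
      simp [pow_zero, Matrix.one_apply_ne hij]
    | succ m ih =>
      intro i j h
      rw [pow_succ]
      rw [Matrix.mul_apply]
      apply Finset.sum_eq_zero
      intro l _
      by_cases hl : (j : ℕ) + 1 < (l : ℕ)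
      · rw [hHess l j hl, mul_zero]
      · rw [ih i l (by omega), zero_mul]
  -- key: monomials
  have key : ∀ m : ℕ, m < k → (A ^ m) *ᵥ v 0 = V *ᵥ ((Hk ^ m) *ᵥ e1) := by
    intro m
    induction m with
    | zero =>
      intro _
      funext x
      simp [pow_zero, hV, e1, Matrix.mulVec, dotProduct, Pi.single_apply,
        Matrix.one_apply, Finset.sum_ite_eq, Finset.sum_ite_eq']
    | succ m ih =>
      intro hm
      have hm' : m < k := by omega
      have hcomb : Hk *ᵥ (Hk ^ m *ᵥ e1) = Hk ^ (m + 1) *ᵥ e1 := by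
        rw [Matrix.mulVec_mulVec, ← pow_succ']
      rw [pow_succ']          -- A ^ (m+1) = A * A ^ m
      rw [← Matrix.mulVec_mulVec, ih hm', Matrix.mulVec_mulVec, hrel,
        Matrix.add_mulVec, Matrix.smul_mulVec, ← Matrix.mulVec_mulVec, hcomb]
      have hwval : ∀ j : Fin k, (j : ℕ) = k - 1 → ((Hk ^ m) *ᵥ e1) j = 0 := by
        intro j hj
        rw [he1, Matrix.mulVec_single]
        simp only [MulOpposite.op_one, one_smul]
        exact hpow m j ⟨0, hk⟩ (by simp [hj]; omega)
      have hz : (Matrix.of fun i (j : Fin k) => v k i * (if (j : ℕ) = k - 1 then 1 else 0)) *ᵥ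
          ((Hk ^ m) *ᵥ e1) = 0 := by
        set w := (Hk ^ m) *ᵥ e1 with hwdef
        funext x
        simp only [Matrix.mulVec, dotProduct, Matrix.of_apply, Pi.zero_apply]
        apply Finset.sum_eq_zero
        intro j _
        by_cases hj : (j : ℕ) = k - 1
        · rw [hwval j hj, mul_zero]
        · simp [hj]
      rw [hz, smul_zero, add_zero]
  intro p hp
  rw [Polynomial.aeval_eq_sum_range, Polynomial.aeval_eq_sum_range]
  rw [sum_mulVec_aux, sum_mulVec_aux, mulVec_sum_aux]
  · apply Finset.sum_congr rfl
    intro i hi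
    rw [Finset.mem_range] at hi
    rw [Matrix.smul_mulVec, Matrix.smul_mulVec, key i (by omega),
      Matrix.mulVec_smul]
end

section
/- Fix δ ∈ ℂ and 1 ≤ k ≤ N−1. Then the matrix Q_{k+1}(δ) is unitary, and Q_{k+1}(δ)^*·(H̄_k − δ·Ī_k) = [R; 0] ∈ ℂ^{(k+1)×k}, where R ∈ ℂ^{k×k} is upper triangular with diagonal entries R_{ℓ,ℓ} = h_{ℓ+1,ℓ}·σ_ℓ(δ)/σ_{ℓ−1}(δ), which are positive real numbers, and the last row of the product is zero. -/
open Polynomial Matrix Finset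

/-- `σ_k(δ) = sqrt(Σ_{j=0}^k |q_j(δ)|²)`. -/
noncomputable def sigmaP (q : ℕ → Polynomial ℂ) (δ : ℂ) (k : ℕ) : ℝ :=
  Real.sqrt (∑ j ∈ Finset.range (k + 1), ‖(q j).eval δ‖ ^ 2)

/-- The conjugate transpose `Q_{k+1}(δ)^*` of the unitary QR-factor, defined entrywise in
terms of the orthonormal polynomials (`0`-based rows/columns). -/
noncomputable def QstarMat (q : ℕ → Polynomial ℂ) (δ : ℂ) (k : ℕ) :
    Matrix (Fin (k + 1)) (Fin (k + 1)) ℂ :=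
  Matrix.of fun i j =>
    if (i : ℕ) = k then (-1 : ℂ) ^ k * (q (j : ℕ)).eval δ / (sigmaP q δ k : ℂ)
    else if (j : ℕ) ≤ (i : ℕ) then
      -((q (j : ℕ)).eval δ * (starRingEnd ℂ) ((q ((i : ℕ) + 1)).eval δ)) /
        ((sigmaP q δ ((i : ℕ) + 1) : ℂ) * (sigmaP q δ (i : ℕ) : ℂ))
    else if (j : ℕ) = (i : ℕ) + 1 then ((sigmaP q δ (i : ℕ) / sigmaP q δ ((i : ℕ) + 1) : ℝ) : ℂ)
    else 0

namespace Stmt3Aux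

noncomputable def sA (a : ℕ → ℂ) (m : ℕ) : ℝ :=
  Real.sqrt (∑ j ∈ Finset.range (m+1), ‖a j‖ ^ 2)

noncomputable def QsA (a : ℕ → ℂ) (k i j : ℕ) : ℂ :=
  if i = k then (-1:ℂ)^k * a j / (sA a k : ℂ)
  else if j ≤ i then -(a j * (starRingEnd ℂ) (a (i+1))) / ((sA a (i+1) : ℂ) * (sA a i : ℂ))
  else if j = i+1 then ((sA a i / sA a (i+1) : ℝ) : ℂ)
  else 0

variable {a : ℕ → ℂ}

lemma sA_pos (ha0 : a 0 = 1) (m : ℕ) : 0 < sA a m := by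
  apply Real.sqrt_pos.mpr
  have h0 : (0:ℝ) < ‖a 0‖ ^ 2 := by simp [ha0]
  exact lt_of_lt_of_le h0 (Finset.single_le_sum (f := fun j => ‖a j‖ ^ 2)
    (fun j _ => by positivity) (Finset.mem_range.mpr (Nat.succ_pos m)))

lemma csA_ne (ha0 : a 0 = 1) (m : ℕ) : ((sA a m : ℝ) : ℂ) ≠ 0 := by
  exact_mod_cast (sA_pos ha0 m).ne'

lemma sum_mul_conj (m : ℕ) :
    ∑ j ∈ Finset.range (m+1), a j * (starRingEnd ℂ) (a j) = ((sA a m : ℝ) : ℂ)^2 := by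
  have h : (sA a m)^2 = ∑ j ∈ Finset.range (m+1), ‖a j‖ ^ 2 :=
    Real.sq_sqrt (by positivity)
  have : ((sA a m : ℝ) : ℂ)^2 = ((∑ j ∈ Finset.range (m+1), ‖a j‖ ^ 2 : ℝ) : ℂ) := by
    rw [← h]; push_cast; ring
  rw [this]
  push_cast
  refine Finset.sum_congr rfl fun j _ => ?_
  rw [Complex.mul_conj, ← Complex.sq_norm]
  norm_cast

lemma csq (m : ℕ) :
    ((sA a (m+1) : ℝ) : ℂ)^2 = ((sA a m : ℝ) : ℂ)^2 + a (m+1) * (starRingEnd ℂ) (a (m+1)) := by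
  rw [← sum_mul_conj, ← sum_mul_conj, Finset.sum_range_succ]

lemma QsA_zero {k i j : ℕ} (hik : i ≠ k) (hj : i + 1 < j) : QsA a k i j = 0 := by
  rw [QsA, if_neg hik, if_neg (by omega), if_neg (by omega)]

lemma QsA_last {k j : ℕ} : QsA a k k j = (-1:ℂ)^k * a j / (sA a k : ℂ) := by
  rw [QsA, if_pos rfl]

lemma QsA_low {k i j : ℕ} (hik : i ≠ k) (hj : j ≤ i) :
    QsA a k i j = -(a j * (starRingEnd ℂ) (a (i+1))) / ((sA a (i+1) : ℂ) * (sA a i : ℂ)) := by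
  rw [QsA, if_neg hik, if_pos hj]

lemma QsA_sup {k i : ℕ} (hik : i ≠ k) :
    QsA a k i (i+1) = ((sA a i : ℝ) : ℂ) / ((sA a (i+1) : ℝ) : ℂ) := by
  rw [QsA, if_neg hik, if_neg (by omega), if_pos rfl]; push_cast; ring

lemma ortho_le (ha0 : a 0 = 1) {k i i' : ℕ} (hii' : i ≤ i') (hi' : i' ≤ k) :
    ∑ j ∈ range (k+1), QsA a k i j * (starRingEnd ℂ) (QsA a k i' j)
      = if i = i' then 1 else 0 := by
  have hcne := csA_ne ha0 (a := a)
  rcases eq_or_lt_of_le (hii'.trans hi') with hik | hik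
  · -- i = k, hence i' = k
    have hi'k : i' = k := le_antisymm hi' (hik ▸ hii')
    rw [hik, hi'k, if_pos rfl]
    have hterm : ∀ j, QsA a k k j * (starRingEnd ℂ) (QsA a k k j)
        = (a j * (starRingEnd ℂ) (a j)) *
          (((-1:ℂ)^k * (-1:ℂ)^k) / (((sA a k : ℝ):ℂ) * ((sA a k : ℝ):ℂ))) := by
      intro j
      rw [QsA_last, _root_.map_div₀, _root_.map_mul, _root_.map_pow, _root_.map_neg, _root_.map_one, Complex.conj_ofReal]
      ring
    rw [Finset.sum_congr rfl fun j _ => hterm j, ← Finset.sum_mul, sum_mul_conj]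
    have h1 : ((-1:ℂ)^k * (-1:ℂ)^k) = 1 := by rw [← mul_pow]; norm_num
    rw [h1, sq, mul_one_div]
    exact div_self (mul_ne_zero (hcne k) (hcne k))
  · -- i < k
    have hine : i ≠ k := hik.ne
    have hsub : range (i+2) ⊆ range (k+1) := Finset.range_subset_range.mpr (by omega)
    rw [← Finset.sum_subset hsub (fun j _ hj => by
      have hj2 : i + 1 < j := by
        simp only [Finset.mem_range, not_lt] at hj; omega
      rw [QsA_zero hine hj2, zero_mul])]
    rw [Finset.sum_range_succ]
    rcases eq_or_lt_of_le hi' with hi'k | hi'k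
    · -- i < k, i' = k
      have hne : i ≠ i' := by omega
      rw [if_neg hne, hi'k]
      have hterm : ∀ j ∈ range (i+1), QsA a k i j * (starRingEnd ℂ) (QsA a k k j)
          = (a j * (starRingEnd ℂ) (a j)) *
            (-((starRingEnd ℂ) (a (i+1)) * (-1:ℂ)^k) /
              (((sA a (i+1) : ℝ):ℂ) * ((sA a i : ℝ):ℂ) * ((sA a k : ℝ):ℂ))) := by
        intro j hj
        rw [QsA_low hine (by simp at hj; omega), QsA_last, _root_.map_div₀, _root_.map_mul, _root_.map_pow,
          _root_.map_neg, _root_.map_one, Complex.conj_ofReal]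
        ring
      rw [Finset.sum_congr rfl hterm, ← Finset.sum_mul, sum_mul_conj,
        QsA_sup hine, QsA_last, _root_.map_div₀, _root_.map_mul, _root_.map_pow, _root_.map_neg, _root_.map_one,
        Complex.conj_ofReal]
      field_simp [hcne i, hcne (i+1), hcne k]
      ring
    · -- i' < k
      have hi'ne : i' ≠ k := hi'k.ne
      rcases eq_or_lt_of_le hii' with heq | hlt
      · -- diagonal, i = i' < k
        rw [heq, if_pos rfl]
        have hterm : ∀ j ∈ range (i'+1), QsA a k i' j * (starRingEnd ℂ) (QsA a k i' j)
            = (a j * (starRingEnd ℂ) (a j)) *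
              ((a (i'+1) * (starRingEnd ℂ) (a (i'+1))) /
                ((((sA a (i'+1) : ℝ):ℂ) * ((sA a i' : ℝ):ℂ)) *
                  (((sA a (i'+1) : ℝ):ℂ) * ((sA a i' : ℝ):ℂ)))) := by
          intro j hj
          rw [QsA_low hi'ne (by simp at hj; omega), _root_.map_div₀, _root_.map_neg, _root_.map_mul,
            Complex.conj_conj, _root_.map_mul, Complex.conj_ofReal, Complex.conj_ofReal]
          ring
        rw [Finset.sum_congr rfl hterm, ← Finset.sum_mul, sum_mul_conj,
          QsA_sup hi'ne, _root_.map_div₀, Complex.conj_ofReal, Complex.conj_ofReal]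
        have key : a (i'+1) * (starRingEnd ℂ) (a (i'+1))
            = ((sA a (i'+1) : ℝ):ℂ)^2 - ((sA a i' : ℝ):ℂ)^2 := by rw [csq]; ring
        rw [key]
        field_simp [hcne i', hcne (i'+1)]
        ring
      · -- i < i' < k
        rw [if_neg (by omega)]
        have hterm : ∀ j ∈ range (i+1), QsA a k i j * (starRingEnd ℂ) (QsA a k i' j)
            = (a j * (starRingEnd ℂ) (a j)) *
              (((starRingEnd ℂ) (a (i+1)) * a (i'+1)) /
                ((((sA a (i+1) : ℝ):ℂ) * ((sA a i : ℝ):ℂ)) *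
                  (((sA a (i'+1) : ℝ):ℂ) * ((sA a i' : ℝ):ℂ)))) := by
          intro j hj
          rw [QsA_low hine (by simp at hj; omega), QsA_low hi'ne (by simp at hj; omega),
            _root_.map_div₀, _root_.map_neg, _root_.map_mul, Complex.conj_conj, _root_.map_mul,
            Complex.conj_ofReal, Complex.conj_ofReal]
          ring
        rw [Finset.sum_congr rfl hterm, ← Finset.sum_mul, sum_mul_conj,
          QsA_sup hine, QsA_low hi'ne (by omega), _root_.map_div₀, _root_.map_neg, _root_.map_mul,
          Complex.conj_conj, _root_.map_mul, Complex.conj_ofReal, Complex.conj_ofReal]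
        field_simp [hcne i, hcne (i+1), hcne i', hcne (i'+1)]
        ring

lemma ortho (ha0 : a 0 = 1) {k i i' : ℕ} (hi : i ≤ k) (hi' : i' ≤ k) :
    ∑ j ∈ range (k+1), QsA a k i j * (starRingEnd ℂ) (QsA a k i' j)
      = if i = i' then 1 else 0 := by
  rcases le_or_gt i i' with h | h
  · exact ortho_le ha0 h hi'
  · have hsym : ∑ j ∈ range (k+1), QsA a k i j * (starRingEnd ℂ) (QsA a k i' j)
        = (starRingEnd ℂ) (∑ j ∈ range (k+1), QsA a k i' j * (starRingEnd ℂ) (QsA a k i j)) := by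
      rw [_root_.map_sum]
      exact Finset.sum_congr rfl fun j _ => by
        rw [_root_.map_mul, Complex.conj_conj]; ring
    rw [hsym, ortho_le ha0 h.le hi, if_neg (by omega), if_neg (by omega), _root_.map_zero]

section Product

variable {k : ℕ} {Mc : ℕ → ℕ → ℂ} {b : ℕ → ℂ}

lemma col_full (hcol : ∀ j p, j < k → j+1 < p → p ≤ k → Mc p j = 0)
    (hdiag : ∀ j, j < k → Mc (j+1) j = b j)
    (hrec : ∀ j, j < k → ∑ p ∈ range (j+1), a p * Mc p j = -(b j * a (j+1)))
    {j : ℕ} (hj : j < k) :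
    ∑ p ∈ range (k+1), a p * Mc p j = 0 := by
  have hsub : range (j+2) ⊆ range (k+1) := Finset.range_subset_range.mpr (by omega)
  rw [← Finset.sum_subset hsub (fun p hp hp2 => by
    simp only [Finset.mem_range, not_lt] at hp hp2
    rw [hcol j p hj (by omega) (by omega), mul_zero])]
  rw [Finset.sum_range_succ, hrec j hj, hdiag j hj]
  ring

lemma col_partial (hcol : ∀ j p, j < k → j+1 < p → p ≤ k → Mc p j = 0)
    (hdiag : ∀ j, j < k → Mc (j+1) j = b j)
    (hrec : ∀ j, j < k → ∑ p ∈ range (j+1), a p * Mc p j = -(b j * a (j+1)))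
    {i j : ℕ} (hi : i ≤ k) (hj : j < k) (hji : j < i) :
    ∑ p ∈ range (i+1), a p * Mc p j = 0 := by
  have hsub : range (j+2) ⊆ range (i+1) := Finset.range_subset_range.mpr (by omega)
  have hsub2 : range (j+2) ⊆ range (k+1) := Finset.range_subset_range.mpr (by omega)
  rw [← Finset.sum_subset hsub (fun p hp hp2 => by
    simp only [Finset.mem_range, not_lt] at hp hp2
    rw [hcol j p hj (by omega) (by omega), mul_zero])]
  rw [Finset.sum_subset hsub2 (fun p hp hp2 => by
    simp only [Finset.mem_range, not_lt] at hp hp2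
    rw [hcol j p hj (by omega) (by omega), mul_zero])]
  exact col_full hcol hdiag hrec hj

lemma row_last (hcol : ∀ j p, j < k → j+1 < p → p ≤ k → Mc p j = 0)
    (hdiag : ∀ j, j < k → Mc (j+1) j = b j)
    (hrec : ∀ j, j < k → ∑ p ∈ range (j+1), a p * Mc p j = -(b j * a (j+1)))
    {j : ℕ} (hj : j < k) :
    ∑ p ∈ range (k+1), QsA a k k p * Mc p j = 0 := by
  have : ∀ p ∈ range (k+1), QsA a k k p * Mc p j
      = ((-1:ℂ)^k / ((sA a k : ℝ):ℂ)) * (a p * Mc p j) := fun p _ => by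
    rw [QsA_last]; ring
  rw [Finset.sum_congr rfl this, ← Finset.mul_sum, col_full hcol hdiag hrec hj, mul_zero]

lemma row_mid {i j : ℕ} (hik : i < k) :
    ∑ p ∈ range (k+1), QsA a k i p * Mc p j
      = (((sA a i : ℝ):ℂ) / ((sA a (i+1) : ℝ):ℂ)) * Mc (i+1) j
        - ((starRingEnd ℂ) (a (i+1)) / (((sA a (i+1) : ℝ):ℂ) * ((sA a i : ℝ):ℂ)))
          * ∑ p ∈ range (i+1), a p * Mc p j := by
  have hine : i ≠ k := hik.ne
  have hsub : range (i+2) ⊆ range (k+1) := Finset.range_subset_range.mpr (by omega)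
  rw [← Finset.sum_subset hsub (fun p hp hp2 => by
    simp only [Finset.mem_range, not_lt] at hp hp2
    rw [QsA_zero hine (by omega), zero_mul])]
  rw [Finset.sum_range_succ, QsA_sup hine]
  have : ∀ p ∈ range (i+1), QsA a k i p * Mc p j
      = (-((starRingEnd ℂ) (a (i+1)) / (((sA a (i+1) : ℝ):ℂ) * ((sA a i : ℝ):ℂ))))
        * (a p * Mc p j) := fun p hp => by
    rw [QsA_low hine (by simp at hp; omega)]; ring
  rw [Finset.sum_congr rfl this, ← Finset.mul_sum]
  ring

lemma row_lower (hcol : ∀ j p, j < k → j+1 < p → p ≤ k → Mc p j = 0)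
    (hdiag : ∀ j, j < k → Mc (j+1) j = b j)
    (hrec : ∀ j, j < k → ∑ p ∈ range (j+1), a p * Mc p j = -(b j * a (j+1)))
    {i j : ℕ} (hik : i < k) (hj : j < k) (hji : j < i) :
    ∑ p ∈ range (k+1), QsA a k i p * Mc p j = 0 := by
  rw [row_mid hik, col_partial hcol hdiag hrec (by omega) hj hji,
    hcol j (i+1) hj (by omega) (by omega)]
  ring

lemma row_diag (ha0 : a 0 = 1)
    (hrec : ∀ j, j < k → ∑ p ∈ range (j+1), a p * Mc p j = -(b j * a (j+1)))
    (hdiag : ∀ j, j < k → Mc (j+1) j = b j)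
    {i : ℕ} (hik : i < k) :
    ∑ p ∈ range (k+1), QsA a k i p * Mc p i
      = b i * (((sA a (i+1) : ℝ):ℂ) / ((sA a i : ℝ):ℂ)) := by
  rw [row_mid hik, hrec i hik, hdiag i hik]
  have key : a (i+1) * (starRingEnd ℂ) (a (i+1))
      = ((sA a (i+1) : ℝ):ℂ)^2 - ((sA a i : ℝ):ℂ)^2 := by rw [csq]; ring
  have h1 := csA_ne ha0 (a := a) i
  have h2 := csA_ne ha0 (a := a) (i+1)
  field_simp
  linear_combination b i * key

end Product
end Stmt3Aux

open Stmt3Aux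

/-- `Q_{k+1}(δ)` is unitary and `Q_{k+1}(δ)^* (H̄_k - δ Ī_k)` is upper
triangular (last row zero) with positive real diagonal entries
`R_{ℓℓ} = h_{ℓ+1,ℓ} σ_ℓ(δ)/σ_{ℓ-1}(δ)`. -/
theorem stmt3 (N : ℕ) (hN : 1 ≤ N) (H : Matrix (Fin N) (Fin N) ℂ)
    (hHess : ∀ i j : Fin N, (j : ℕ) + 1 < (i : ℕ) → H i j = 0)
    (hsub : ∀ (k : ℕ) (hk : k + 1 < N),
      0 < (H ⟨k + 1, hk⟩ ⟨k, Nat.lt_of_succ_lt hk⟩).re ∧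
        (H ⟨k + 1, hk⟩ ⟨k, Nat.lt_of_succ_lt hk⟩).im = 0)
    (q : ℕ → Polynomial ℂ) (hq0 : q 0 = 1)
    (hqrec : ∀ (k : ℕ) (hk : k + 1 < N),
      Polynomial.C (H ⟨k + 1, hk⟩ ⟨k, Nat.lt_of_succ_lt hk⟩) * q (k + 1) =
        Polynomial.X * q k -
          ∑ j : Fin (k + 1),
            Polynomial.C (H ⟨(j : ℕ), Nat.lt_trans j.isLt hk⟩ ⟨k, Nat.lt_of_succ_lt hk⟩) *
              q (j : ℕ))
    (δ : ℂ) (k : ℕ) (hk1 : 1 ≤ k) (hkN : k < N)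
    (M : Matrix (Fin (k + 1)) (Fin k) ℂ)
    (hM : M = H.submatrix (Fin.castLE hkN) (Fin.castLE hkN.le) -
      δ • Matrix.of fun (i : Fin (k + 1)) (j : Fin k) => if (i : ℕ) = (j : ℕ) then 1 else 0) :
    (QstarMat q δ k * (QstarMat q δ k)ᴴ = 1 ∧ (QstarMat q δ k)ᴴ * QstarMat q δ k = 1) ∧
    (∀ j : Fin k, (QstarMat q δ k * M) ⟨k, Nat.lt_succ_self k⟩ j = 0) ∧
    (∀ (i : Fin (k + 1)) (j : Fin k), (j : ℕ) < (i : ℕ) → (QstarMat q δ k * M) i j = 0) ∧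
    (∀ j : Fin k,
      (QstarMat q δ k * M) (Fin.castSucc j) j =
        H ⟨(j : ℕ) + 1, Nat.lt_of_le_of_lt (Nat.succ_le_of_lt j.isLt) hkN⟩
            ⟨(j : ℕ), Nat.lt_trans j.isLt hkN⟩ *
          ((sigmaP q δ ((j : ℕ) + 1) / sigmaP q δ (j : ℕ) : ℝ) : ℂ) ∧
      0 < ((QstarMat q δ k * M) (Fin.castSucc j) j).re ∧
      ((QstarMat q δ k * M) (Fin.castSucc j) j).im = 0) := by
  set a : ℕ → ℂ := fun m => (q m).eval δ with ha
  have ha0 : a 0 = 1 := by simp [ha, hq0]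
  have hQ : ∀ i j : Fin (k+1), QstarMat q δ k i j = QsA a k (i:ℕ) (j:ℕ) := fun i j => rfl
  have hsig : ∀ m, sigmaP q δ m = sA a m := fun m => rfl
  have hQQ : QstarMat q δ k * (QstarMat q δ k)ᴴ = 1 := by
    ext i i'
    rw [Matrix.mul_apply, Matrix.one_apply]
    have hterm : ∀ j : Fin (k+1), QstarMat q δ k i j * (QstarMat q δ k)ᴴ j i'
        = QsA a k (i:ℕ) (j:ℕ) * (starRingEnd ℂ) (QsA a k (i':ℕ) (j:ℕ)) := fun j => by
      rw [Matrix.conjTranspose_apply, hQ, hQ]; rfl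
    rw [Finset.sum_congr rfl fun j _ => hterm j,
      Fin.sum_univ_eq_sum_range (fun m => QsA a k (i:ℕ) m * (starRingEnd ℂ) (QsA a k (i':ℕ) m)),
      ortho ha0 (Nat.lt_succ_iff.mp i.isLt) (Nat.lt_succ_iff.mp i'.isLt)]
    simp [Fin.ext_iff]
  refine ⟨⟨hQQ, mul_eq_one_comm.mp hQQ⟩, ?_⟩
  set Mc : ℕ → ℕ → ℂ := fun p j => if h : p < k+1 ∧ j < k then M ⟨p, h.1⟩ ⟨j, h.2⟩ else 0
    with hMcd
  set b : ℕ → ℂ := fun j =>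
      if h : j < k then H ⟨j+1, by omega⟩ ⟨j, by omega⟩ else 0 with hbd
  have hMc : ∀ (p : Fin (k+1)) (j : Fin k), M p j = Mc (p:ℕ) (j:ℕ) := fun p j => by
    rw [hMcd]; simp only [p.isLt, j.isLt, and_self, dif_pos]
  have hMent : ∀ (p : ℕ) (j : ℕ) (hp : p < k+1) (hj : j < k),
      Mc p j = H ⟨p, by omega⟩ ⟨j, by omega⟩ - δ * (if p = j then 1 else 0) := by
    intro p j hp hj
    rw [hMcd]
    simp only [hp, hj, and_self, dif_pos, hM, Matrix.sub_apply, Matrix.smul_apply,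
      Matrix.submatrix_apply, Matrix.of_apply, smul_eq_mul]
    rfl
  have hcol : ∀ j p, j < k → j+1 < p → p ≤ k → Mc p j = 0 := by
    intro j p hj hjp hpk
    rw [hMent p j (by omega) hj, hHess ⟨p, by omega⟩ ⟨j, by omega⟩ hjp,
      if_neg (by omega)]
    ring
  have hdiag : ∀ j, j < k → Mc (j+1) j = b j := by
    intro j hj
    rw [hMent (j+1) j (by omega) hj, if_neg (by omega), hbd]
    simp only [hj, dif_pos]
    ring
  have hrec : ∀ j, j < k → ∑ p ∈ range (j+1), a p * Mc p j = -(b j * a (j+1)) := by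
    intro j hj
    have hjN : j + 1 < N := by omega
    have heval := congrArg (Polynomial.eval δ) (hqrec j hjN)
    simp only [Polynomial.eval_mul, Polynomial.eval_C, Polynomial.eval_sub,
      Polynomial.eval_X, Polynomial.eval_finset_sum] at heval
    have hg : ∀ p : Fin (j+1),
        H ⟨(p:ℕ), Nat.lt_trans p.isLt hjN⟩ ⟨j, Nat.lt_of_succ_lt hjN⟩
            * Polynomial.eval δ (q (p:ℕ))
        = (fun m => (if h : m < N then H ⟨m, h⟩ ⟨j, Nat.lt_of_succ_lt hjN⟩ else 0) * a m)
            (p:ℕ) := fun p => by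
      simp only [ha, dif_pos (Nat.lt_trans p.isLt hjN)]
    rw [Finset.sum_congr rfl fun p _ => hg p,
      Fin.sum_univ_eq_sum_range
        (fun m => (if h : m < N then H ⟨m, h⟩ ⟨j, Nat.lt_of_succ_lt hjN⟩ else 0) * a m)]
      at heval
    have hsplit : ∀ p ∈ range (j+1), a p * Mc p j
        = (if h : p < N then H ⟨p, h⟩ ⟨j, Nat.lt_of_succ_lt hjN⟩ else 0) * a p
          - (if p = j then δ * a j else 0) := by
      intro p hp
      rw [Finset.mem_range] at hp
      rw [hMent p j (by omega) hj, dif_pos (by omega : p < N)]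
      by_cases hpj : p = j
      · subst hpj; rw [if_pos rfl, if_pos rfl]; ring
      · rw [if_neg hpj, if_neg hpj]; ring
    rw [Finset.sum_congr rfl hsplit, Finset.sum_sub_distrib,
      Finset.sum_ite_eq' (range (j+1)) j (fun _ => δ * a j),
      if_pos (Finset.mem_range.mpr (by omega))]
    have hb : b j = H ⟨j+1, hjN⟩ ⟨j, Nat.lt_of_succ_lt hjN⟩ := by
      rw [hbd]; simp only [hj, dif_pos]
    rw [hb]
    have heval2 : H ⟨j+1, hjN⟩ ⟨j, Nat.lt_of_succ_lt hjN⟩ * a (j+1)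
        = δ * a j - ∑ p ∈ range (j+1),
            (if h : p < N then H ⟨p, h⟩ ⟨j, Nat.lt_of_succ_lt hjN⟩ else 0) * a p := heval
    linear_combination heval2
  have hprod : ∀ (i : Fin (k+1)) (j : Fin k),
      (QstarMat q δ k * M) i j = ∑ p ∈ range (k+1), QsA a k (i:ℕ) p * Mc p (j:ℕ) := by
    intro i j
    rw [Matrix.mul_apply,
      Finset.sum_congr rfl fun p _ => by rw [hQ, hMc],
      Fin.sum_univ_eq_sum_range (fun m => QsA a k (i:ℕ) m * Mc m (j:ℕ))]
  refine ⟨?_, ?_, ?_⟩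
  · intro j
    rw [hprod]
    exact row_last hcol hdiag hrec j.isLt
  · intro i j hji
    rw [hprod]
    rcases eq_or_lt_of_le (Nat.lt_succ_iff.mp i.isLt) with hik | hik
    · rw [hik]
      exact row_last hcol hdiag hrec j.isLt
    · exact row_lower hcol hdiag hrec hik j.isLt hji
  · intro j
    have hjk : ((Fin.castSucc j : Fin (k+1)) : ℕ) = (j:ℕ) := rfl
    have hd : (QstarMat q δ k * M) (Fin.castSucc j) j
        = b (j:ℕ) * (((sA a ((j:ℕ)+1) : ℝ):ℂ) / ((sA a (j:ℕ) : ℝ):ℂ)) := by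
      rw [hprod, hjk]
      exact row_diag ha0 hrec hdiag j.isLt
    have hb : b (j:ℕ) = H ⟨(j:ℕ)+1, Nat.lt_of_le_of_lt (Nat.succ_le_of_lt j.isLt) hkN⟩
        ⟨(j:ℕ), Nat.lt_trans j.isLt hkN⟩ := by
      rw [hbd]; simp only [j.isLt, dif_pos]
    have hspos : 0 < sA a ((j:ℕ)+1) / sA a (j:ℕ) :=
      div_pos (sA_pos ha0 _) (sA_pos ha0 _)
    obtain ⟨hre, him⟩ := hsub (j:ℕ) (by omega)
    have hHeq : H ⟨(j:ℕ)+1, Nat.lt_of_le_of_lt (Nat.succ_le_of_lt j.isLt) hkN⟩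
        ⟨(j:ℕ), Nat.lt_trans j.isLt hkN⟩
        = H ⟨(j:ℕ)+1, by omega⟩ ⟨(j:ℕ), by omega⟩ := rfl
    refine ⟨?_, ?_, ?_⟩
    · rw [hd, hb, hsig, hsig, Complex.ofReal_div]
    · rw [hd, hb, ← Complex.ofReal_div, Complex.mul_re, Complex.ofReal_re,
        Complex.ofReal_im, hHeq]
      rw [hHeq] at him  -- no-op safe
      simp only [mul_zero, sub_zero]
      exact mul_pos hre hspos
    · rw [hd, hb, ← Complex.ofReal_div, Complex.mul_im, Complex.ofReal_re,
        Complex.ofReal_im, hHeq]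
      simp only [mul_zero, zero_add]
      rw [him, zero_mul]
end

section
/- Fix δ ∈ ℂ and 2 ≤ k ≤ N−1. Then Q_{k+1}(δ)^* = Ω_{k+1}(δ)·diag(Q_k(δ)^*, 1), where Ω_{k+1}(δ) ∈ ℂ^{(k+1)×(k+1)} is the Givens rotation equal to the identity except for the 2×2 block in rows and columns k, k+1, which equals [[conj(c_k(δ)), s_k(δ)], [−s_k(δ), c_k(δ)]] with s_k(δ) = σ_{k−1}(δ)/σ_k(δ) and c_k(δ) = (−1)^k q_k(δ)/σ_k(δ). In particular s_k(δ) ≥ 0 and s_k(δ)² + |c_k(δ)|² = 1. -/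
open Polynomial Matrix Finset

lemma sigmaP_pos (q : ℕ → Polynomial ℂ) (hq0 : q 0 = 1) (δ : ℂ) (m : ℕ) :
    0 < sigmaP q δ m := by
  unfold sigmaP
  apply Real.sqrt_pos.mpr
  apply Finset.sum_pos'
  · intro i _; positivity
  · exact ⟨0, Finset.mem_range.mpr (by omega), by simp [hq0]⟩

lemma sigmaP_sq (q : ℕ → Polynomial ℂ) (δ : ℂ) (m : ℕ) :
    (sigmaP q δ m) ^ 2 = ∑ j ∈ Finset.range (m + 1), ‖(q j).eval δ‖ ^ 2 := by
  unfold sigmaP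
  apply Real.sq_sqrt
  positivity

/-- For `2 ≤ k ≤ N-1`, `Q_{k+1}(δ)^* = Ω_{k+1}(δ) · diag(Q_k(δ)^*, 1)`,
where `Ω_{k+1}(δ)` is the Givens rotation with `s_k(δ) = σ_{k-1}(δ)/σ_k(δ)` and
`c_k(δ) = (-1)^k q_k(δ)/σ_k(δ)`; in particular `s_k(δ) ≥ 0` and `s_k(δ)² + |c_k(δ)|² = 1`.
(`0`-based: the rotation acts in rows/columns `k-1, k`.) -/
theorem stmt4 (N : ℕ) (hN : 1 ≤ N) (H : Matrix (Fin N) (Fin N) ℂ)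
    (hHess : ∀ i j : Fin N, (j : ℕ) + 1 < (i : ℕ) → H i j = 0)
    (hsub : ∀ (k : ℕ) (hk : k + 1 < N),
      0 < (H ⟨k + 1, hk⟩ ⟨k, Nat.lt_of_succ_lt hk⟩).re ∧
        (H ⟨k + 1, hk⟩ ⟨k, Nat.lt_of_succ_lt hk⟩).im = 0)
    (q : ℕ → Polynomial ℂ) (hq0 : q 0 = 1)
    (hqrec : ∀ (k : ℕ) (hk : k + 1 < N),
      Polynomial.C (H ⟨k + 1, hk⟩ ⟨k, Nat.lt_of_succ_lt hk⟩) * q (k + 1) =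
        Polynomial.X * q k -
          ∑ j : Fin (k + 1),
            Polynomial.C (H ⟨(j : ℕ), Nat.lt_trans j.isLt hk⟩ ⟨k, Nat.lt_of_succ_lt hk⟩) *
              q (j : ℕ))
    (δ : ℂ) (k : ℕ) (hk2 : 2 ≤ k) (hkN : k < N)
    (s : ℝ) (hs : s = sigmaP q δ (k - 1) / sigmaP q δ k)
    (c : ℂ) (hc : c = (-1 : ℂ) ^ k * (q k).eval δ / (sigmaP q δ k : ℂ))
    (Ω : Matrix (Fin (k + 1)) (Fin (k + 1)) ℂ)
    (hΩ : Ω = Matrix.of fun (i j : Fin (k + 1)) =>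
      if (i : ℕ) = k - 1 ∧ (j : ℕ) = k - 1 then (starRingEnd ℂ) c
      else if (i : ℕ) = k - 1 ∧ (j : ℕ) = k then (s : ℂ)
      else if (i : ℕ) = k ∧ (j : ℕ) = k - 1 then -(s : ℂ)
      else if (i : ℕ) = k ∧ (j : ℕ) = k then c
      else if (i : ℕ) = (j : ℕ) then 1 else 0)
    (D : Matrix (Fin (k + 1)) (Fin (k + 1)) ℂ)
    (hD : D = Matrix.of fun (i j : Fin (k + 1)) =>
      if hi : (i : ℕ) < k then
        if hj : (j : ℕ) < k then
          QstarMat q δ (k - 1) ⟨(i : ℕ), by omega⟩ ⟨(j : ℕ), by omega⟩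
        else 0
      else if (j : ℕ) < k then 0 else 1) :
    QstarMat q δ k = Ω * D ∧ 0 ≤ s ∧ s ^ 2 + ‖c‖ ^ 2 = 1 := by
  have hσ : ∀ m, 0 < sigmaP q δ m := fun m => sigmaP_pos q hq0 δ m
  have hσC : ∀ m, (sigmaP q δ m : ℂ) ≠ 0 := fun m =>
    Complex.ofReal_ne_zero.mpr (hσ m).ne'
  have e1 : (sigmaP q δ (k - 1) : ℂ) ≠ 0 := hσC (k - 1)
  have e2 : (sigmaP q δ k : ℂ) ≠ 0 := hσC k
  have hk1 : k - 1 + 1 = k := by omega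
  have hAlt : k - 1 < k + 1 := by omega
  have hBlt : k < k + 1 := by omega
  have hAval : (((⟨k - 1, hAlt⟩ : Fin (k + 1))) : ℕ) = k - 1 := rfl
  have hBval : (((⟨k, hBlt⟩ : Fin (k + 1))) : ℕ) = k := rfl
  have hABne : (⟨k - 1, hAlt⟩ : Fin (k + 1)) ≠ ⟨k, hBlt⟩ := by
    simp only [ne_eq, Fin.mk.injEq]; omega
  have hm1 : ((-1 : ℂ)) ^ k = -(-1 : ℂ) ^ (k - 1) := by
    conv_lhs => rw [show k = (k - 1) + 1 by omega]
    rw [pow_succ]; ring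
  have hsq2 : ((-1 : ℂ)) ^ ((k - 1) * 2) = 1 := by
    rw [mul_comm, pow_mul]; norm_num
  have hsq1 : ((-1 : ℂ)) ^ (k - 1) * ((-1 : ℂ)) ^ (k - 1) = 1 := by
    rw [← pow_add, ← two_mul, pow_mul]; norm_num
  refine ⟨?_, ?_, ?_⟩
  · -- matrix identity
    have hΩval : ∀ (i l : Fin (k + 1)), Ω i l =
        (if (i : ℕ) = k - 1 ∧ (l : ℕ) = k - 1 then (starRingEnd ℂ) c
        else if (i : ℕ) = k - 1 ∧ (l : ℕ) = k then (s : ℂ)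
        else if (i : ℕ) = k ∧ (l : ℕ) = k - 1 then -(s : ℂ)
        else if (i : ℕ) = k ∧ (l : ℕ) = k then c
        else if (i : ℕ) = (l : ℕ) then 1 else 0) := by
      intro i l; rw [hΩ]; rfl
    ext i j
    rw [Matrix.mul_apply]
    symm
    rcases lt_trichotomy (i : ℕ) (k - 1) with hi | hi | hi
    · -- row i < k-1 : Ω acts as identity
      have hterm : ∀ l : Fin (k + 1),
          Ω i l * D l j = if l = i then D i j else 0 := by
        intro l
        rw [hΩval]
        by_cases hl : l = i
        · subst hl
          rw [if_pos (rfl : l = l)]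
          split_ifs <;> first | rw [one_mul] | (exfalso; omega)
        · rw [if_neg hl]
          have hlv : ¬ (i : ℕ) = (l : ℕ) := fun h => hl (Fin.ext h.symm)
          split_ifs <;> first | rw [zero_mul] | (exfalso; omega)
      rw [Finset.sum_congr rfl fun l _ => hterm l,
        Finset.sum_ite_eq' Finset.univ i fun _ => D i j, if_pos (Finset.mem_univ i)]
      -- now: D i j = QstarMat q δ k i j
      rw [hD]
      simp only [Matrix.of_apply, QstarMat]
      split_ifs <;> first | rfl | omega | (exfalso; omega)
    · -- row i = k-1
      have hterm : ∀ l : Fin (k + 1),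
          Ω i l * D l j =
            (if l = (⟨k - 1, hAlt⟩ : Fin (k + 1)) then
                (starRingEnd ℂ) c * D ⟨k - 1, hAlt⟩ j else 0) +
            (if l = (⟨k, hBlt⟩ : Fin (k + 1)) then (s : ℂ) * D ⟨k, hBlt⟩ j else 0) := by
        intro l
        rw [hΩval]
        by_cases h1 : l = (⟨k - 1, hAlt⟩ : Fin (k + 1))
        · subst h1
          simp only [hAval, hBval, Fin.mk.injEq, and_true, true_and]
          split_ifs <;> first | ring1 | (exfalso; omega)
        · by_cases h2 : l = (⟨k, hBlt⟩ : Fin (k + 1))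
          · subst h2
            simp only [hAval, hBval, Fin.mk.injEq, and_true, true_and]
            split_ifs <;> first | ring1 | (exfalso; omega)
          · rw [if_neg h1, if_neg h2, add_zero]
            have hl1 : ¬ (l : ℕ) = k - 1 := fun h => h1 (Fin.ext h)
            have hl2 : ¬ (l : ℕ) = k := fun h => h2 (Fin.ext h)
            split_ifs <;> first | rw [zero_mul] | (exfalso; omega)
      rw [Finset.sum_congr rfl fun l _ => hterm l, Finset.sum_add_distrib,
        Finset.sum_ite_eq' Finset.univ _ fun _ => (starRingEnd ℂ) c * D ⟨k - 1, hAlt⟩ j,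
        Finset.sum_ite_eq' Finset.univ _ fun _ => (s : ℂ) * D ⟨k, hBlt⟩ j,
        if_pos (Finset.mem_univ _), if_pos (Finset.mem_univ _)]
      have hDA : D ⟨k - 1, hAlt⟩ j =
          if (j : ℕ) < k then (-1 : ℂ) ^ (k - 1) * (q (j : ℕ)).eval δ / (sigmaP q δ (k - 1) : ℂ)
          else 0 := by
        rw [hD]
        simp only [Matrix.of_apply, QstarMat, hAval, hBval]
        split_ifs <;> first | rfl | omega | (exfalso; omega)
      have hDB : D ⟨k, hBlt⟩ j = if (j : ℕ) < k then 0 else 1 := by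
        rw [hD]
        simp only [Matrix.of_apply, hAval, hBval]
        split_ifs <;> first | rfl | omega | (exfalso; omega)
      rw [hDA, hDB]
      simp only [QstarMat, Matrix.of_apply]
      by_cases hj : (j : ℕ) < k
      · rw [if_pos hj, if_pos hj, mul_zero, add_zero, if_neg (by omega : ¬ (i : ℕ) = k),
          if_pos (by omega : (j : ℕ) ≤ (i : ℕ)), hi, hk1, hc, map_div₀, _root_.map_mul]
        simp only [_root_.map_pow, _root_.map_neg, _root_.map_one, Complex.conj_ofReal]
        rw [hm1]
        field_simp
        linear_combination (-(starRingEnd ℂ) ((q k).eval δ) * (q (j : ℕ)).eval δ) * hsq2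
      · rw [if_neg hj, if_neg hj, mul_zero, zero_add, mul_one,
          if_neg (by omega : ¬ (i : ℕ) = k), if_neg (by omega : ¬ (j : ℕ) ≤ (i : ℕ)),
          if_pos (by omega : (j : ℕ) = (i : ℕ) + 1), hi, hk1, hs]
    · -- row i = k
      have hik : (i : ℕ) = k := by omega
      have hterm : ∀ l : Fin (k + 1),
          Ω i l * D l j =
            (if l = (⟨k - 1, hAlt⟩ : Fin (k + 1)) then -(s : ℂ) * D ⟨k - 1, hAlt⟩ j else 0) +
            (if l = (⟨k, hBlt⟩ : Fin (k + 1)) then c * D ⟨k, hBlt⟩ j else 0) := by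
        intro l
        rw [hΩval]
        by_cases h1 : l = (⟨k - 1, hAlt⟩ : Fin (k + 1))
        · subst h1
          simp only [hAval, hBval, Fin.mk.injEq, and_true, true_and]
          split_ifs <;> first | ring1 | (exfalso; omega)
        · by_cases h2 : l = (⟨k, hBlt⟩ : Fin (k + 1))
          · subst h2
            simp only [hAval, hBval, Fin.mk.injEq, and_true, true_and]
            split_ifs <;> first | ring1 | (exfalso; omega)
          · rw [if_neg h1, if_neg h2, add_zero]
            have hl1 : ¬ (l : ℕ) = k - 1 := fun h => h1 (Fin.ext h)
            have hl2 : ¬ (l : ℕ) = k := fun h => h2 (Fin.ext h)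
            split_ifs <;> first | rw [zero_mul] | (exfalso; omega)
      rw [Finset.sum_congr rfl fun l _ => hterm l, Finset.sum_add_distrib,
        Finset.sum_ite_eq' Finset.univ _ fun _ => -(s : ℂ) * D ⟨k - 1, hAlt⟩ j,
        Finset.sum_ite_eq' Finset.univ _ fun _ => c * D ⟨k, hBlt⟩ j,
        if_pos (Finset.mem_univ _), if_pos (Finset.mem_univ _)]
      have hDA : D ⟨k - 1, hAlt⟩ j =
          if (j : ℕ) < k then (-1 : ℂ) ^ (k - 1) * (q (j : ℕ)).eval δ / (sigmaP q δ (k - 1) : ℂ)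
          else 0 := by
        rw [hD]
        simp only [Matrix.of_apply, QstarMat, hAval, hBval]
        split_ifs <;> first | rfl | omega | (exfalso; omega)
      have hDB : D ⟨k, hBlt⟩ j = if (j : ℕ) < k then 0 else 1 := by
        rw [hD]
        simp only [Matrix.of_apply, hAval, hBval]
        split_ifs <;> first | rfl | omega | (exfalso; omega)
      rw [hDA, hDB]
      simp only [QstarMat, Matrix.of_apply]
      by_cases hj : (j : ℕ) < k
      · rw [if_pos hj, if_pos hj, mul_zero, add_zero, if_pos hik, hs, hm1]
        push_cast
        field_simp
      · rw [if_neg hj, if_neg hj, mul_zero, zero_add, mul_one, if_pos hik,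
          (by omega : (j : ℕ) = k), hc]
  · rw [hs]
    exact div_nonneg (hσ _).le (hσ _).le
  · rw [hs, hc]
    have habs : ‖(-1 : ℂ) ^ k * (q k).eval δ / (sigmaP q δ k : ℂ)‖ =
        ‖(q k).eval δ‖ / sigmaP q δ k := by
      rw [norm_div, norm_mul, norm_pow]
      simp [Complex.norm_real, abs_of_pos (hσ k)]
    rw [habs, div_pow, div_pow]
    have hsq : (sigmaP q δ k) ^ 2 = (sigmaP q δ (k - 1)) ^ 2 + ‖(q k).eval δ‖ ^ 2 := by
      rw [sigmaP_sq, sigmaP_sq, hk1, Finset.sum_range_succ]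
    rw [← add_div, ← hsq, div_self (pow_ne_zero 2 (hσ k).ne')]
end

section
/- Fix δ ∈ ℂ and 1 ≤ k ≤ N−1. Then Q_{k+1}(δ) is (0,1)-upper-separable: for every 1 ≤ j ≤ k+1, the submatrix of Q_{k+1}(δ) formed by rows 1, …, j and columns j, …, k+1 has rank at most 1. Moreover, for 1 ≤ m ≤ k+1 and 1 ≤ ℓ ≤ k−m+2, the submatrix Q̃ of Q_{k+1}(δ) formed by the first m rows and the last ℓ columns has spectral norm ‖Q̃‖ = σ_{m−1}(δ)/σ_{k−ℓ+1}(δ). -/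
open Polynomial Matrix Finset

/-- The spectral (ℓ²-operator) norm of a complex matrix. -/
noncomputable def specNorm {m n : ℕ} (M : Matrix (Fin m) (Fin n) ℂ) : ℝ :=
  ‖LinearMap.toContinuousLinearMap (Matrix.toEuclideanLin M)‖

noncomputable def wAux (q : ℕ → Polynomial ℂ) (δ : ℂ) (i : ℕ) : ℂ :=
  (starRingEnd ℂ) ((q i).eval δ)

noncomputable def dAux (q : ℕ → Polynomial ℂ) (δ : ℂ) (k j : ℕ) : ℂ :=
  if j = k then ((-1 : ℂ) ^ k) / (sigmaP q δ k : ℂ)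
  else -((q (j + 1)).eval δ) / ((sigmaP q δ (j + 1) : ℂ) * (sigmaP q δ j : ℂ))

lemma entryAux (q : ℕ → Polynomial ℂ) (δ : ℂ) (k : ℕ) (i j : Fin (k + 1))
    (h : (i : ℕ) ≤ (j : ℕ)) :
    ((QstarMat q δ k)ᴴ) i j = wAux q δ (i : ℕ) * dAux q δ k (j : ℕ) := by
  rw [Matrix.conjTranspose_apply, QstarMat]
  simp only [Matrix.of_apply]
  by_cases hj : (j : ℕ) = k
  · rw [if_pos hj, dAux, if_pos hj]
    simp only [Complex.star_def, map_div₀, _root_.map_mul, map_pow, map_neg,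
      _root_.map_one, Complex.conj_ofReal, wAux]
    ring
  · rw [if_neg hj, if_pos h, dAux, if_neg hj]
    simp only [Complex.star_def, map_div₀, _root_.map_mul, map_neg, Complex.conj_ofReal,
      Complex.conj_conj, wAux]
    ring

lemma sigma_sq (q : ℕ → Polynomial ℂ) (δ : ℂ) (j : ℕ) :
    (sigmaP q δ j) ^ 2 = ∑ t ∈ Finset.range (j + 1), ‖(q t).eval δ‖ ^ 2 := by
  rw [sigmaP, Real.sq_sqrt]
  exact Finset.sum_nonneg fun t _ => sq_nonneg _

lemma sigma_pos (q : ℕ → Polynomial ℂ) (δ : ℂ) (hq0 : q 0 = 1) (j : ℕ) :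
    0 < sigmaP q δ j := by
  rw [sigmaP, Real.sqrt_pos]
  have h0 : ‖(q 0).eval δ‖ ^ 2 = 1 := by simp [hq0]
  calc (0:ℝ) < 1 := one_pos
    _ = ‖(q 0).eval δ‖ ^ 2 := h0.symm
    _ ≤ _ := Finset.single_le_sum (fun t _ => sq_nonneg (‖(q t).eval δ‖))
        (Finset.mem_range.mpr (Nat.succ_pos j))

lemma sigma_step (q : ℕ → Polynomial ℂ) (δ : ℂ) (j : ℕ) :
    (sigmaP q δ (j + 1)) ^ 2 = (sigmaP q δ j) ^ 2 + ‖(q (j + 1)).eval δ‖ ^ 2 := by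
  rw [sigma_sq, sigma_sq, Finset.sum_range_succ]

lemma dAux_norm_sq_last (q : ℕ → Polynomial ℂ) (δ : ℂ) (hq0 : q 0 = 1) (k : ℕ) :
    ‖dAux q δ k k‖ ^ 2 = 1 / (sigmaP q δ k) ^ 2 := by
  have hσ := sigma_pos q δ hq0 k
  rw [dAux, if_pos rfl]
  rw [norm_div, norm_pow, norm_neg, norm_one, one_pow, Complex.norm_real,
    Real.norm_eq_abs, abs_of_pos hσ]
  rw [div_pow, one_pow]

lemma dAux_norm_sq (q : ℕ → Polynomial ℂ) (δ : ℂ) (hq0 : q 0 = 1) (k j : ℕ) (hj : j < k) :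
    ‖dAux q δ k j‖ ^ 2 = 1 / (sigmaP q δ j) ^ 2 - 1 / (sigmaP q δ (j + 1)) ^ 2 := by
  have hσj := sigma_pos q δ hq0 j
  have hσj1 := sigma_pos q δ hq0 (j + 1)
  rw [dAux, if_neg (Nat.ne_of_lt hj)]
  rw [norm_div, norm_neg, norm_mul, Complex.norm_real, Complex.norm_real,
    Real.norm_eq_abs, Real.norm_eq_abs, abs_of_pos hσj, abs_of_pos hσj1]
  have habs : ‖(q (j + 1)).eval δ‖ ^ 2 =
      (sigmaP q δ (j + 1)) ^ 2 - (sigmaP q δ j) ^ 2 := by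
    rw [sigma_step]; ring
  rw [div_pow, mul_pow, habs]
  have key : ∀ A B : ℝ, A ≠ 0 → B ≠ 0 → (B - A) / (B * A) = 1 / A - 1 / B := by
    intro A B hA hB
    rw [div_sub_div _ _ hA hB, one_mul, mul_one, mul_comm B A]
  exact key _ _ (ne_of_gt (pow_pos hσj 2)) (ne_of_gt (pow_pos hσj1 2))

lemma dAux_sum (q : ℕ → Polynomial ℂ) (δ : ℂ) (hq0 : q 0 = 1) (k : ℕ) :
    ∀ b a, a + b = k →
      ∑ t ∈ Finset.range (b + 1), ‖dAux q δ k (a + t)‖ ^ 2 = 1 / (sigmaP q δ a) ^ 2 := by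
  intro b
  induction b with
  | zero =>
    intro a ha
    have hak : a = k := by omega
    subst hak
    simp only [zero_add, Finset.sum_range_one, add_zero]
    exact dAux_norm_sq_last q δ hq0 a
  | succ n ih =>
    intro a ha
    rw [Finset.sum_range_succ' (fun t => ‖dAux q δ k (a + t)‖ ^ 2) (n + 1)]
    have h2 : ∑ t ∈ Finset.range (n + 1), ‖dAux q δ k (a + (t + 1))‖ ^ 2
        = 1 / (sigmaP q δ (a + 1)) ^ 2 := by
      have := ih (a + 1) (by omega)
      simpa [Nat.add_assoc, Nat.add_comm 1] using this
    rw [h2]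
    simp only [Nat.add_zero]
    rw [dAux_norm_sq q δ hq0 k a (by omega)]
    ring

lemma rank_vecMulVec_le {m n : ℕ} (u : Fin m → ℂ) (v : Fin n → ℂ) :
    Matrix.rank (vecMulVec u v) ≤ 1 := by
  have hr : LinearMap.range (vecMulVec u v).mulVecLin ≤ Submodule.span ℂ {u} := by
    rintro x ⟨y, rfl⟩
    have : (vecMulVec u v).mulVecLin y = (v ⬝ᵥ y) • u := by
      funext i
      simp [mulVecLin_apply, mulVec, dotProduct, vecMulVec, Finset.sum_mul, Finset.mul_sum]
      ring_nf
    rw [this]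
    exact Submodule.smul_mem _ _ (Submodule.mem_span_singleton_self u)
  calc Matrix.rank (vecMulVec u v)
      = Module.finrank ℂ (LinearMap.range (vecMulVec u v).mulVecLin) := rfl
    _ ≤ Module.finrank ℂ (Submodule.span ℂ ({u} : Set (Fin m → ℂ))) :=
        Submodule.finrank_mono hr
    _ ≤ 1 := by simpa using finrank_span_le_card ({u} : Set (Fin m → ℂ))

lemma specNorm_vecMulVec {m n : ℕ} (u : Fin m → ℂ) (v : Fin n → ℂ) :
    specNorm (vecMulVec u v) =
      ‖((WithLp.equiv 2 _).symm u : EuclideanSpace ℂ (Fin m))‖ *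
      ‖((WithLp.equiv 2 _).symm v : EuclideanSpace ℂ (Fin n))‖ := by
  have key : LinearMap.toContinuousLinearMap (Matrix.toEuclideanLin (vecMulVec u v)) =
      (innerSL ℂ ((WithLp.equiv 2 _).symm (star v) : EuclideanSpace ℂ (Fin n))).smulRight
        ((WithLp.equiv 2 _).symm u : EuclideanSpace ℂ (Fin m)) := by
    ext x i
    simp only [LinearMap.coe_toContinuousLinearMap', Matrix.toEuclideanLin_apply,
      ContinuousLinearMap.smulRight_apply, innerSL_apply_apply]
    show (vecMulVec u v *ᵥ (WithLp.equiv 2 (Fin n → ℂ)) x) i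
        = (inner ℂ ((WithLp.equiv 2 _).symm (star v) : EuclideanSpace ℂ (Fin n)) x : ℂ) * u i
    rw [mulVec, dotProduct]
    simp [vecMulVec, PiLp.inner_apply, Finset.sum_mul, WithLp.equiv_symm_apply, PiLp.toLp_apply]
    exact Finset.sum_congr rfl fun j _ => by ring
  rw [specNorm, key, ContinuousLinearMap.norm_smulRight_apply, innerSL_apply_norm, mul_comm]
  congr 1
  simp [EuclideanSpace.norm_eq, WithLp.equiv_symm_apply, PiLp.toLp_apply]


/-- `Q_{k+1}(δ)` is `(0,1)`-upper-separable: every submatrix formed by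
rows `1..j` and columns `j..k+1` has rank at most `1`; moreover the submatrix of the first
`m` rows and last `ℓ` columns has spectral norm `σ_{m-1}(δ)/σ_{k-ℓ+1}(δ)`. -/
theorem stmt5 (N : ℕ) (hN : 1 ≤ N) (H : Matrix (Fin N) (Fin N) ℂ)
    (hHess : ∀ i j : Fin N, (j : ℕ) + 1 < (i : ℕ) → H i j = 0)
    (hsub : ∀ (k : ℕ) (hk : k + 1 < N),
      0 < (H ⟨k + 1, hk⟩ ⟨k, Nat.lt_of_succ_lt hk⟩).re ∧
        (H ⟨k + 1, hk⟩ ⟨k, Nat.lt_of_succ_lt hk⟩).im = 0)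
    (q : ℕ → Polynomial ℂ) (hq0 : q 0 = 1)
    (hqrec : ∀ (k : ℕ) (hk : k + 1 < N),
      Polynomial.C (H ⟨k + 1, hk⟩ ⟨k, Nat.lt_of_succ_lt hk⟩) * q (k + 1) =
        Polynomial.X * q k -
          ∑ j : Fin (k + 1),
            Polynomial.C (H ⟨(j : ℕ), Nat.lt_trans j.isLt hk⟩ ⟨k, Nat.lt_of_succ_lt hk⟩) *
              q (j : ℕ))
    (δ : ℂ) (k : ℕ) (hk1 : 1 ≤ k) (hkN : k < N) :
    (∀ (j : ℕ) (hj1 : 1 ≤ j) (hj : j ≤ k + 1),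
      Matrix.rank
          (((QstarMat q δ k)ᴴ).submatrix (Fin.castLE hj)
            (fun t : Fin (k + 1 + 1 - j) =>
              (⟨j - 1 + (t : ℕ), by have := t.isLt; omega⟩ : Fin (k + 1)))) ≤ 1) ∧
    (∀ (m ℓ : ℕ) (hm1 : 1 ≤ m) (hm : m ≤ k + 1) (hℓ1 : 1 ≤ ℓ) (hℓ : ℓ + m ≤ k + 2),
      specNorm
          (((QstarMat q δ k)ᴴ).submatrix (Fin.castLE hm)
            (fun t : Fin ℓ =>
              (⟨k + 1 - ℓ + (t : ℕ), by have := t.isLt; omega⟩ : Fin (k + 1)))) =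
        sigmaP q δ (m - 1) / sigmaP q δ (k + 1 - ℓ)) := by
  constructor
  · intro j hj1 hj
    have heq : ((QstarMat q δ k)ᴴ).submatrix (Fin.castLE hj)
        (fun t : Fin (k + 1 + 1 - j) =>
          (⟨j - 1 + (t : ℕ), by have := t.isLt; omega⟩ : Fin (k + 1)))
        = vecMulVec (fun i : Fin j => wAux q δ (i : ℕ))
            (fun t : Fin (k + 1 + 1 - j) => dAux q δ k (j - 1 + (t : ℕ))) := by
      funext i t
      rw [Matrix.submatrix_apply,
        entryAux q δ k _ _ (by have hi := i.isLt; simp only [Fin.coe_castLE]; omega)]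
      rfl
    rw [heq]
    exact _root_.rank_vecMulVec_le _ _
  · intro m ℓ hm1 hm hℓ1 hℓ
    obtain ⟨b, rfl⟩ : ∃ b, ℓ = b + 1 := ⟨ℓ - 1, by omega⟩
    have heq : ((QstarMat q δ k)ᴴ).submatrix (Fin.castLE hm)
        (fun t : Fin (b + 1) =>
          (⟨k + 1 - (b + 1) + (t : ℕ), by have := t.isLt; omega⟩ : Fin (k + 1)))
        = vecMulVec (fun i : Fin m => wAux q δ (i : ℕ))
            (fun t : Fin (b + 1) => dAux q δ k (k + 1 - (b + 1) + (t : ℕ))) := by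
      funext i t
      rw [Matrix.submatrix_apply,
        entryAux q δ k _ _ (by have hi := i.isLt; simp only [Fin.coe_castLE]; omega)]
      rfl
    rw [heq, specNorm_vecMulVec]
    have hu : ‖((WithLp.equiv 2 _).symm (fun i : Fin m => wAux q δ (i : ℕ)) :
        EuclideanSpace ℂ (Fin m))‖ = sigmaP q δ (m - 1) := by
      rw [EuclideanSpace.norm_eq, sigmaP]
      congr 1
      have hm' : m - 1 + 1 = m := by omega
      rw [hm', ← Fin.sum_univ_eq_sum_range (fun i => ‖(q i).eval δ‖ ^ 2) m]
      refine Finset.sum_congr rfl fun i _ => ?_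
      simp [WithLp.equiv_symm_apply, PiLp.toLp_apply, wAux]
    have hv : ‖((WithLp.equiv 2 _).symm
        (fun t : Fin (b + 1) => dAux q δ k (k + 1 - (b + 1) + (t : ℕ))) :
        EuclideanSpace ℂ (Fin (b + 1)))‖ = 1 / sigmaP q δ (k + 1 - (b + 1)) := by
      rw [EuclideanSpace.norm_eq]
      have hsum : ∑ i : Fin (b + 1), ‖((WithLp.equiv 2 _).symm
            (fun t : Fin (b + 1) => dAux q δ k (k + 1 - (b + 1) + (t : ℕ))) :
              EuclideanSpace ℂ (Fin (b + 1))) i‖ ^ 2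
          = 1 / (sigmaP q δ (k + 1 - (b + 1))) ^ 2 := by
        have h1 : ∀ i : Fin (b + 1), ‖((WithLp.equiv 2 _).symm
            (fun t : Fin (b + 1) => dAux q δ k (k + 1 - (b + 1) + (t : ℕ))) :
              EuclideanSpace ℂ (Fin (b + 1))) i‖ ^ 2
            = ‖dAux q δ k (k + 1 - (b + 1) + (i : ℕ))‖ ^ 2 := fun i => rfl
        simp only [h1]
        rw [Fin.sum_univ_eq_sum_range
          (fun t => ‖dAux q δ k (k + 1 - (b + 1) + t)‖ ^ 2) (b + 1)]
        exact dAux_sum q δ hq0 k b (k + 1 - (b + 1)) (by omega)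
      rw [hsum]
      have hσ := sigma_pos q δ hq0 (k + 1 - (b + 1))
      rw [show (1 : ℝ) / (sigmaP q δ (k + 1 - (b + 1))) ^ 2
          = (1 / sigmaP q δ (k + 1 - (b + 1))) ^ 2 by rw [div_pow, one_pow]]
      exact Real.sqrt_sq (by positivity)
    rw [hu, hv, mul_one_div]
end

section
/- For every δ ∈ ℂ and 0 ≤ k ≤ N−1, the k-th GMRES residual satisfies r_k(δ) = p_k(A)·b, where p_k(z) = σ_k(δ)^{−2} · Σ_{j=0}^{k} conj(q_j(δ))·q_j(z); in particular ‖r_k(δ)‖ = ‖b‖/σ_k(δ). -/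
open Polynomial Matrix Finset

/-- The standard inner product `x^* y` on `ℂ^n` (conjugate-linear in the first slot). -/
noncomputable def inn {n : ℕ} (x y : Fin n → ℂ) : ℂ := ∑ i, (starRingEnd ℂ) (x i) * y i

/-- The Euclidean norm on `ℂ^n`. -/
noncomputable def nrm {n : ℕ} (x : Fin n → ℂ) : ℝ := Real.sqrt (inn x x).re

section aux
variable {n : ℕ}

lemma inn_add_right (x y z : Fin n → ℂ) : inn x (y + z) = inn x y + inn x z := by
  simp [inn, mul_add, Finset.sum_add_distrib]

lemma inn_smul_right (a : ℂ) (x y : Fin n → ℂ) : inn x (a • y) = a * inn x y := by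
  simp only [inn, Finset.mul_sum, Pi.smul_apply, smul_eq_mul]
  exact Finset.sum_congr rfl fun i _ => by ring

lemma inn_sub_right (x y z : Fin n → ℂ) : inn x (y - z) = inn x y - inn x z := by
  simp [inn, mul_sub, Finset.sum_sub_distrib]

lemma inn_add_left (x y z : Fin n → ℂ) : inn (x + y) z = inn x z + inn y z := by
  simp [inn, add_mul, Finset.sum_add_distrib]

lemma inn_smul_left (a : ℂ) (x y : Fin n → ℂ) :
    inn (a • x) y = (starRingEnd ℂ) a * inn x y := by
  simp [inn, Finset.mul_sum, mul_assoc]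

lemma inn_sub_left (x y z : Fin n → ℂ) : inn (x - y) z = inn x z - inn y z := by
  simp [inn, sub_mul, Finset.sum_sub_distrib]

lemma inn_sum_right {ι : Type*} (s : Finset ι) (x : Fin n → ℂ) (f : ι → Fin n → ℂ) :
    inn x (∑ i ∈ s, f i) = ∑ i ∈ s, inn x (f i) := by
  simp [inn, Finset.mul_sum]
  rw [Finset.sum_comm]

lemma inn_sum_left {ι : Type*} (s : Finset ι) (x : Fin n → ℂ) (f : ι → Fin n → ℂ) :
    inn (∑ i ∈ s, f i) x = ∑ i ∈ s, inn (f i) x := by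
  simp [inn, Finset.sum_mul]
  rw [Finset.sum_comm]

lemma inn_conj (x y : Fin n → ℂ) : inn x y = (starRingEnd ℂ) (inn y x) := by
  simp [inn, map_sum, mul_comm]

lemma inn_self (x : Fin n → ℂ) : inn x x = ((∑ i, ‖x i‖ ^ 2 : ℝ) : ℂ) := by
  simp only [inn]
  push_cast
  exact Finset.sum_congr rfl fun i _ => by
    rw [mul_comm, Complex.mul_conj]; norm_cast; rw [Complex.sq_norm]

lemma inn_self_eq_zero {x : Fin n → ℂ} (h : inn x x = 0) : x = 0 := by
  rw [inn_self] at h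
  norm_cast at h
  have := (Finset.sum_eq_zero_iff_of_nonneg (fun i _ => sq_nonneg _)).mp h
  funext i
  have := this i (Finset.mem_univ i)
  simpa using pow_eq_zero_iff (n := 2) (by norm_num) |>.mp this

lemma nrm_pos {x : Fin n → ℂ} (h : x ≠ 0) : 0 < nrm x := by
  rw [nrm, inn_self, Complex.ofReal_re]
  apply Real.sqrt_pos.mpr
  rcases lt_or_eq_of_le (Finset.sum_nonneg fun i (_ : i ∈ Finset.univ) => sq_nonneg (‖x i‖)) with h' | h'
  · exact h'
  · exfalso; apply h
    have hz := (Finset.sum_eq_zero_iff_of_nonneg (fun i _ => sq_nonneg (‖x i‖))).mp h'.symm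
    funext i
    simpa using pow_eq_zero_iff (n := 2) (by norm_num) |>.mp (hz i (Finset.mem_univ i))

lemma sum_mulVec' {n : ℕ} {ι : Type*} (s : Finset ι) (M : ι → Matrix (Fin n) (Fin n) ℂ)
    (x : Fin n → ℂ) : (∑ i ∈ s, M i).mulVec x = ∑ i ∈ s, (M i).mulVec x := by
  ext j
  simp only [Matrix.mulVec, dotProduct, Finset.sum_apply, Finset.sum_mul,
    Matrix.sum_apply]
  rw [Finset.sum_comm]

end aux

/-- The `k`-th GMRES residual for `(A - δI)x = b` (initial guess `0`)
satisfies `r_k(δ) = p_k(A) b` with `p_k = σ_k(δ)⁻² Σ_{j≤k} conj(q_j(δ)) q_j`; in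
particular `‖r_k(δ)‖ = ‖b‖/σ_k(δ)`. -/
theorem stmt7 (n N : ℕ) (hN : 1 ≤ N) (hNn : N ≤ n)
    (A : Matrix (Fin n) (Fin n) ℂ) (b : Fin n → ℂ) (hb : b ≠ 0)
    (v : ℕ → Fin n → ℂ)
    (horth : ∀ i j : ℕ, i < N → j < N → inn (v i) (v j) = if i = j then 1 else 0)
    (hv1 : v 0 = (((nrm b)⁻¹ : ℝ) : ℂ) • b)
    (H : Matrix (Fin N) (Fin N) ℂ)
    (hHess : ∀ i j : Fin N, (j : ℕ) + 1 < (i : ℕ) → H i j = 0)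
    (hsub : ∀ (k : ℕ) (hk : k + 1 < N),
      0 < (H ⟨k + 1, hk⟩ ⟨k, Nat.lt_of_succ_lt hk⟩).re ∧
        (H ⟨k + 1, hk⟩ ⟨k, Nat.lt_of_succ_lt hk⟩).im = 0)
    (harn : ∀ (k : ℕ) (hk : k + 1 < N),
      A.mulVec (v k) = ∑ j : Fin (k + 2),
        H ⟨(j : ℕ), Nat.lt_of_le_of_lt (Nat.lt_succ_iff.mp j.isLt) hk⟩
          ⟨k, Nat.lt_of_succ_lt hk⟩ • v (j : ℕ))
    (harnN : A.mulVec (v (N - 1)) =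
      ∑ j : Fin N, H j ⟨N - 1, Nat.sub_lt hN Nat.one_pos⟩ • v (j : ℕ))
    (q : ℕ → Polynomial ℂ) (hq0 : q 0 = 1)
    (hqrec : ∀ (k : ℕ) (hk : k + 1 < N),
      Polynomial.C (H ⟨k + 1, hk⟩ ⟨k, Nat.lt_of_succ_lt hk⟩) * q (k + 1) =
        Polynomial.X * q k -
          ∑ j : Fin (k + 1),
            Polynomial.C (H ⟨(j : ℕ), Nat.lt_trans j.isLt hk⟩ ⟨k, Nat.lt_of_succ_lt hk⟩) *
              q (j : ℕ))
    (u : ℂ → ℕ → Fin n → ℂ)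
    (humem : ∀ (δ : ℂ) (k : ℕ), k < N →
      u δ k ∈ Submodule.span ℂ {x : Fin n → ℂ | ∃ j < k, x = (A - δ • 1).mulVec (v j)})
    (huperp : ∀ (δ : ℂ) (k : ℕ), k < N →
      ∀ y ∈ Submodule.span ℂ {x : Fin n → ℂ | ∃ j < k, x = (A - δ • 1).mulVec (v j)},
        inn y (b - u δ k) = 0)
    (r : ℂ → ℕ → Fin n → ℂ) (hr : ∀ δ k, r δ k = b - u δ k)
    (hrne : ∀ (δ : ℂ) (k : ℕ), k < N → r δ k ≠ 0)
    (w : ℂ → ℕ → Fin n → ℂ) (hw : ∀ δ k, w δ k = (((nrm (r δ k))⁻¹ : ℝ) : ℂ) • r δ k)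
 :
    ∀ (δ : ℂ) (k : ℕ), k < N →
      r δ k =
        (Polynomial.aeval A
            ((((sigmaP q δ k : ℝ) : ℂ) ^ 2)⁻¹ •
              ∑ j ∈ Finset.range (k + 1),
                Polynomial.C ((starRingEnd ℂ) ((q j).eval δ)) * q j)).mulVec b ∧
      nrm (r δ k) = nrm b / sigmaP q δ k := by
  intro δ k hk
  classical
  -- basic setup
  have hβ : 0 < nrm b := nrm_pos hb
  set β : ℝ := nrm b with hβdef
  have hbv : b = ((β : ℝ) : ℂ) • v 0 := by
    rw [hv1, smul_smul]
    norm_cast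
    rw [mul_inv_cancel₀ hβ.ne']
    simp
  -- totalized H
  set H' : ℕ → ℕ → ℂ := fun i j =>
    if h : i < N ∧ j < N then H ⟨i, h.1⟩ ⟨j, h.2⟩ else 0 with hH'def
  have hH'eq : ∀ (i j : ℕ) (hi : i < N) (hj : j < N), H' i j = H ⟨i, hi⟩ ⟨j, hj⟩ := by
    intro i j hi hj
    simp only [hH'def, dif_pos (And.intro hi hj)]
  have harn' : ∀ j, j + 1 < N → A.mulVec (v j) = ∑ i ∈ Finset.range (j + 2), H' i j • v i := by
    intro j hj
    rw [harn j hj, Finset.sum_range]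
    refine Finset.sum_congr rfl fun i _ => ?_
    rw [hH'eq _ _ (Nat.lt_of_le_of_lt (Nat.lt_succ_iff.mp i.isLt) hj) (Nat.lt_of_succ_lt hj)]
  have hqrec' : ∀ j, j + 1 < N →
      Polynomial.C (H' (j + 1) j) * q (j + 1) =
        Polynomial.X * q j - ∑ i ∈ Finset.range (j + 1), Polynomial.C (H' i j) * q i := by
    intro j hj
    rw [hH'eq _ _ hj (Nat.lt_of_succ_lt hj), hqrec j hj, Finset.sum_range]
    congr 1
    refine Finset.sum_congr rfl fun i _ => ?_
    rw [hH'eq _ _ (Nat.lt_trans i.isLt hj) (Nat.lt_of_succ_lt hj)]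
  have hsubne : ∀ j, j + 1 < N → H' (j + 1) j ≠ 0 := by
    intro j hj
    rw [hH'eq _ _ hj (Nat.lt_of_succ_lt hj)]
    intro h0
    have := (hsub j hj).1
    rw [h0] at this
    simp at this
  -- key: q_j(A) b = β • v j
  have hkey : ∀ j, j < N → (Polynomial.aeval A (q j)).mulVec b = ((β : ℝ) : ℂ) • v j := by
    intro j
    induction j using Nat.strong_induction_on with
    | _ j ih =>
      intro hj
      match j with
      | 0 =>
        rw [hq0]
        simpa using hbv
      | j + 1 =>
        have hrec := hqrec' j hj
        have hc := congrArg (fun p => (Polynomial.aeval A p).mulVec b) hrec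
        simp only [← Polynomial.smul_eq_C_mul, _root_.map_smul, map_sub, map_sum,
          _root_.map_mul, Polynomial.aeval_X, Matrix.smul_mulVec, Matrix.sub_mulVec,
          sum_mulVec'] at hc
        rw [← Matrix.mulVec_mulVec, ih j (Nat.lt_succ_self j) (Nat.lt_of_succ_lt hj),
          Matrix.mulVec_smul, harn' j hj, Finset.sum_range_succ] at hc
        have hterms : ∀ i ∈ Finset.range (j + 1),
            H' i j • (Polynomial.aeval A (q i)).mulVec b = H' i j • (((β : ℝ) : ℂ) • v i) := by
          intro i hi
          rw [ih i (Finset.mem_range.mp hi) (Nat.lt_trans (Finset.mem_range.mp hi) hj)]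
        rw [Finset.sum_congr rfl hterms] at hc
        have hc2 : H' (j + 1) j • (Polynomial.aeval A (q (j + 1))).mulVec b
            = H' (j + 1) j • (((β : ℝ) : ℂ) • v (j + 1)) := by
          rw [hc, smul_add]
          have hsw : ((β : ℝ) : ℂ) • ∑ i ∈ Finset.range (j + 1), H' i j • v i
              = ∑ i ∈ Finset.range (j + 1), H' i j • (((β : ℝ) : ℂ) • v i) := by
            rw [Finset.smul_sum]
            exact Finset.sum_congr rfl fun i _ => smul_comm _ _ _
          rw [hsw, smul_comm]
          abel
        exact smul_right_injective _ (hsubne j hj) hc2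
  -- sigma and S
  set S : ℝ := ∑ j ∈ Finset.range (k + 1), ‖(q j).eval δ‖ ^ 2 with hSdef
  have hS1 : (1 : ℝ) ≤ S := by
    have h0 : ‖(q 0).eval δ‖ ^ 2 = 1 := by rw [hq0]; simp
    calc (1:ℝ) = ‖(q 0).eval δ‖ ^ 2 := h0.symm
    _ ≤ S := by
        rw [hSdef]
        exact Finset.single_le_sum (f := fun j => ‖(q j).eval δ‖ ^ 2)
          (fun i _ => sq_nonneg _) (Finset.mem_range.mpr (Nat.succ_pos k))
  have hSpos : 0 < S := lt_of_lt_of_le one_pos hS1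
  have hSC : ((S : ℝ) : ℂ) ≠ 0 := by exact_mod_cast hSpos.ne'
  have hσ : sigmaP q δ k = Real.sqrt S := rfl
  have hσsq : (sigmaP q δ k) ^ 2 = S := by rw [hσ]; exact Real.sq_sqrt hSpos.le
  set c : ℕ → ℂ := fun l => (starRingEnd ℂ) ((q l).eval δ) with hcdef
  set t : Fin n → ℂ := ∑ l ∈ Finset.range (k + 1), c l • v l with htdef
  set γ : ℂ := ((S : ℝ) : ℂ)⁻¹ * ((β : ℝ) : ℂ) with hγdef
  have hγreal : (starRingEnd ℂ) γ = γ := by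
    rw [hγdef]
    rw [← Complex.ofReal_inv]
    simp [Complex.conj_ofReal]
  have hγne : γ ≠ 0 := by
    rw [hγdef]
    exact mul_ne_zero (inv_ne_zero hSC) (by exact_mod_cast hβ.ne')
  set ρ : Fin n → ℂ := γ • t with hρdef
  -- inner products with t
  have hvt : ∀ i, i ≤ k → inn (v i) t = c i := by
    intro i hi
    rw [htdef, inn_sum_right]
    have hterm : ∀ l ∈ Finset.range (k + 1),
        inn (v i) (c l • v l) = if i = l then c l else 0 := by
      intro l hl
      have hl' := Finset.mem_range.mp hl
      rw [inn_smul_right, horth i l (by omega) (by omega)]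
      by_cases h : i = l <;> simp [h]
    rw [Finset.sum_congr rfl hterm, Finset.sum_ite_eq (Finset.range (k + 1)) i c,
      if_pos (Finset.mem_range.mpr (Nat.lt_succ_of_le hi))]
  have htt : inn t t = ((S : ℝ) : ℂ) := by
    nth_rewrite 1 [htdef]
    rw [inn_sum_left]
    have hterm : ∀ l ∈ Finset.range (k + 1),
        inn (c l • v l) t = ((‖(q l).eval δ‖ ^ 2 : ℝ) : ℂ) := by
      intro l hl
      have hl' := Finset.mem_range.mp hl
      rw [inn_smul_left, hvt l (by omega), hcdef]
      simp only []
      rw [Complex.conj_conj]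
      rw [Complex.mul_conj]
      norm_cast
      rw [Complex.sq_norm]
    rw [Finset.sum_congr rfl hterm, hSdef]
    push_cast
    rfl
  -- recurrence evaluated at δ
  have heval : ∀ j, j < k →
      ∑ i ∈ Finset.range (j + 2), H' i j * (q i).eval δ = δ * (q j).eval δ := by
    intro j hj
    have hjN : j + 1 < N := by omega
    have he := congrArg (Polynomial.eval δ) (hqrec' j hjN)
    simp only [Polynomial.eval_mul, Polynomial.eval_C, Polynomial.eval_sub,
      Polynomial.eval_X, Polynomial.eval_finset_sum] at he
    rw [Finset.sum_range_succ]
    linear_combination he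
  -- orthogonality of generators to t
  have hWt : ∀ j, j < k → inn ((A - δ • 1).mulVec (v j)) t = 0 := by
    intro j hj
    have hjN : j + 1 < N := by omega
    rw [Matrix.sub_mulVec, Matrix.smul_mulVec, Matrix.one_mulVec, inn_sub_left,
      inn_smul_left, harn' j hjN, inn_sum_left]
    have hterm : ∀ i ∈ Finset.range (j + 2),
        inn (H' i j • v i) t = (starRingEnd ℂ) (H' i j * (q i).eval δ) := by
      intro i hi
      have hi' := Finset.mem_range.mp hi
      rw [inn_smul_left, hvt i (by omega), _root_.map_mul]
    rw [Finset.sum_congr rfl hterm, ← map_sum, heval j hj, hvt j (le_of_lt hj), _root_.map_mul]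
    simp only [hcdef]
    ring
  have horthoW : ∀ y ∈ Submodule.span ℂ
      {x : Fin n → ℂ | ∃ j < k, x = (A - δ • 1).mulVec (v j)}, inn y t = 0 := by
    intro y hy
    induction hy using Submodule.span_induction with
    | mem x hx => obtain ⟨j, hj, rfl⟩ := hx; exact hWt j hj
    | zero => simp [inn]
    | add x y _ _ hx hy => rw [inn_add_left, hx, hy, add_zero]
    | smul a x _ hx => rw [inn_smul_left, hx, mul_zero]
  -- each v j (j ≤ k) in span of v 0 and generators
  have hmemv : ∀ j, j ≤ k → v j ∈ Submodule.span ℂ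
      (insert (v 0) {x : Fin n → ℂ | ∃ j < k, x = (A - δ • 1).mulVec (v j)}) := by
    intro j
    induction j using Nat.strong_induction_on with
    | _ j ih =>
      intro hj
      match j, hj with
      | 0, hj => exact Submodule.subset_span (Set.mem_insert _ _)
      | j + 1, hj =>
        have hjk : j < k := hj
        have hjN : j + 1 < N := by omega
        have hid : H' (j + 1) j • v (j + 1) =
            (A - δ • 1).mulVec (v j) + δ • v j
              - ∑ i ∈ Finset.range (j + 1), H' i j • v i := by
          rw [Matrix.sub_mulVec, Matrix.smul_mulVec, Matrix.one_mulVec, harn' j hjN,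
            Finset.sum_range_succ]
          abel
        have hmem : H' (j + 1) j • v (j + 1) ∈ Submodule.span ℂ
            (insert (v 0) {x : Fin n → ℂ | ∃ j < k, x = (A - δ • 1).mulVec (v j)}) := by
          rw [hid]
          refine Submodule.sub_mem _ (Submodule.add_mem _ ?_ ?_) ?_
          · exact Submodule.subset_span (Set.mem_insert_of_mem _ ⟨j, hjk, rfl⟩)
          · exact Submodule.smul_mem _ _ (ih j (Nat.lt_succ_self j) (by omega))
          · refine Submodule.sum_mem _ fun i hi => Submodule.smul_mem _ _ ?_
            have hi' := Finset.mem_range.mp hi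
            exact ih i (by omega) (by omega)
        have h2 := Submodule.smul_mem (Submodule.span ℂ
            (insert (v 0) {x : Fin n → ℂ | ∃ j < k, x = (A - δ • 1).mulVec (v j)}))
            (H' (j + 1) j)⁻¹ hmem
        rwa [inv_smul_smul₀ (hsubne j hjN)] at h2
  -- b - ρ in span of v 0 and generators
  have hbρV : b - ρ ∈ Submodule.span ℂ
      (insert (v 0) {x : Fin n → ℂ | ∃ j < k, x = (A - δ • 1).mulVec (v j)}) := by
    refine Submodule.sub_mem _ ?_ ?_
    · rw [hbv]; exact Submodule.smul_mem _ _ (hmemv 0 (Nat.zero_le k))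
    · rw [hρdef, htdef]
      refine Submodule.smul_mem _ _ (Submodule.sum_mem _ fun l hl => Submodule.smul_mem _ _ ?_)
      have hl' := Finset.mem_range.mp hl
      exact hmemv l (by omega)
  obtain ⟨a, z, hzW, hdecomp⟩ := Submodule.mem_span_insert.mp hbρV
  have hρv0 : inn ρ (v 0) = γ := by
    rw [hρdef, inn_smul_left, hγreal, inn_conj t (v 0), hvt 0 (Nat.zero_le k), hcdef]
    simp only []
    rw [Complex.conj_conj, hq0]
    simp
  have hρρ : inn ρ ρ = γ * ((β : ℝ) : ℂ) := by
    rw [hρdef, inn_smul_left, inn_smul_right, hγreal, htt, hγdef]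
    field_simp
  have hρb : inn ρ b = γ * ((β : ℝ) : ℂ) := by
    rw [hbv, inn_smul_right, hρv0, mul_comm]
  have hρbρ : inn ρ (b - ρ) = 0 := by rw [inn_sub_right, hρb, hρρ, sub_self]
  have hρz : inn ρ z = 0 := by
    rw [hρdef, inn_smul_left, inn_conj t z, horthoW z hzW]
    simp
  have ha : a = 0 := by
    have h0 : (0 : ℂ) = a * γ := by
      rw [← hρbρ, hdecomp, inn_add_right, inn_smul_right, hρv0, hρz, add_zero]
    rcases mul_eq_zero.mp h0.symm with h | h
    · exact h
    · exact absurd h hγne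
  have hbρW : b - ρ ∈ Submodule.span ℂ
      {x : Fin n → ℂ | ∃ j < k, x = (A - δ • 1).mulVec (v j)} := by
    rw [hdecomp, ha]
    simpa using hzW
  -- uniqueness of the orthogonal projection
  have hrρ : r δ k = ρ := by
    have hdW : ρ - r δ k ∈ Submodule.span ℂ
        {x : Fin n → ℂ | ∃ j < k, x = (A - δ • 1).mulVec (v j)} := by
      have hrew : ρ - r δ k = u δ k - (b - ρ) := by rw [hr]; abel
      rw [hrew]
      exact Submodule.sub_mem _ (humem δ k hk) hbρW
    have hdd : inn (ρ - r δ k) (ρ - r δ k) = 0 := by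
      rw [inn_sub_right]
      have h1 : inn (ρ - r δ k) ρ = 0 := by
        rw [hρdef, inn_smul_right, horthoW _ hdW, mul_zero]
      have h2 : inn (ρ - r δ k) (r δ k) = 0 := by
        have h3 := huperp δ k hk _ hdW
        rwa [← hr δ k] at h3
      rw [h1, h2, sub_zero]
    exact (sub_eq_zero.mp (inn_self_eq_zero hdd)).symm
  constructor
  · rw [hrρ]
    rw [_root_.map_smul, Matrix.smul_mulVec, map_sum, sum_mulVec']
    have hterm : ∀ j ∈ Finset.range (k + 1),
        (Polynomial.aeval A (Polynomial.C ((starRingEnd ℂ) ((q j).eval δ)) * q j)).mulVec b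
          = c j • (((β : ℝ) : ℂ) • v j) := by
      intro j hjr
      have hj' := Finset.mem_range.mp hjr
      rw [← Polynomial.smul_eq_C_mul, _root_.map_smul, Matrix.smul_mulVec,
        hkey j (by omega), hcdef]
    rw [Finset.sum_congr rfl hterm]
    have hswap : ∑ j ∈ Finset.range (k + 1), c j • (((β : ℝ) : ℂ) • v j)
        = ((β : ℝ) : ℂ) • t := by
      rw [htdef, Finset.smul_sum]
      exact Finset.sum_congr rfl fun j _ => (smul_comm _ _ _).symm
    rw [hswap]
    have hσS : (((sigmaP q δ k : ℝ) : ℂ)) ^ 2 = ((S : ℝ) : ℂ) := by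
      rw [← Complex.ofReal_pow, hσsq]
    rw [hσS, hρdef, hγdef, smul_smul]
  · rw [hrρ, nrm]
    have hre : inn ρ ρ = (((S⁻¹ * β ^ 2 : ℝ)) : ℂ) := by
      rw [hρρ, hγdef]
      push_cast
      ring
    rw [hre, Complex.ofReal_re, hσ]
    rw [Real.sqrt_mul (inv_nonneg.mpr hSpos.le), Real.sqrt_inv, Real.sqrt_sq hβ.le]
    rw [mul_comm, ← div_eq_mul_inv]
end

section
/- Assume additionally that p(z)/q(z) admits the partial fraction decomposition p(z)/q(z) = Σ_{ℓ=1}^{m₂} d_ℓ/(z − z_ℓ) + π(z), i.e. p(z) = Σ_{ℓ=1}^{m₂} d_ℓ·(q(z)/(z − z_ℓ)) + π(z)·q(z) as polynomials, with z_1, …, z_{m₂} ∈ ℂ the distinct simple roots of q, d_ℓ ∈ ℂ, and π a polynomial, and that no z_ℓ is an eigenvalue of H_N. Then for all 1 ≤ i ≤ j ≤ N the (i,j) entry of H_N − G_N·F_N^* − π(H_N)^* equals Σ_{ℓ=1}^{m₂} conj(d_ℓ)·conj(q_{i−1}(z_ℓ))·conj( ((H_N − z_ℓ·I_N)^{−1})_{j,1}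 ); equivalently, H_N − G_N·F_N^* − π(H_N)^* − Σ_{ℓ=1}^{m₂} conj(d_ℓ)·(q_0(z_ℓ), …, q_{N−1}(z_ℓ))^*·e_1^*·((H_N − z_ℓ·I_N)^{−1})^* is strictly lower triangular. -/
set_option maxHeartbeats 1000000



open Polynomial Matrix Finset

lemma aeval_mul_V {n N : ℕ} {A : Matrix (Fin n) (Fin n) ℂ} {V : Matrix (Fin n) (Fin N) ℂ}
    {H : Matrix (Fin N) (Fin N) ℂ} (hAV : A * V = V * H) (r : ℂ[X]) :
    (aeval A r) * V = V * (aeval H r) := by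
  induction r using Polynomial.induction_on with
  | C c =>
      simp [Algebra.algebraMap_eq_smul_one, Matrix.smul_mul, Matrix.mul_smul]
  | add p q hp hq =>
      simp [Matrix.add_mul, Matrix.mul_add, hp, hq]
  | monomial k c ih =>
      have h2 : (aeval A) (C c * X ^ (k+1)) = (aeval A) (C c * X ^ k) * A := by
        simp [pow_succ, _root_.map_mul, mul_assoc]
      have h3 : (aeval H) (C c * X ^ (k+1)) = (aeval H) (C c * X ^ k) * H := by
        simp [pow_succ, _root_.map_mul, mul_assoc]
      rw [h2, h3, Matrix.mul_assoc, hAV, ← Matrix.mul_assoc, ih, Matrix.mul_assoc]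

lemma isUnit_factor {n : ℕ} {A : Matrix (Fin n) (Fin n) ℂ} {qq r s : ℂ[X]}
    (hq : IsUnit (aeval A qq)) (hfac : qq = r * s) : IsUnit (aeval A r) := by
  rw [Matrix.isUnit_iff_isUnit_det] at hq ⊢
  rw [hfac, _root_.map_mul, Matrix.det_mul] at hq
  exact isUnit_of_mul_isUnit_left hq

lemma keylemma (n N m₂ m₃ : ℕ)
    (A : Matrix (Fin n) (Fin n) ℂ) (F G : Matrix (Fin n) (Fin m₃) ℂ)
    (p qq : Polynomial ℂ) (hqA : IsUnit (Polynomial.aeval A qq))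
    (z : Fin m₂ → ℂ) (a : ℂ)
    (hqfact : qq = Polynomial.C a * ∏ ℓ : Fin m₂, (Polynomial.X - Polynomial.C (z ℓ)))
    (hbml : Aᴴ = (Polynomial.aeval A p) * (Polynomial.aeval A qq)⁻¹ + F * Gᴴ)
    (V : Matrix (Fin n) (Fin N) ℂ) (hV : Vᴴ * V = 1)
    (H : Matrix (Fin N) (Fin N) ℂ)
    (hAV : A * V = V * H)
    (hzH : ∀ ℓ : Fin m₂, IsUnit (H - z ℓ • 1))
    (d : Fin m₂ → ℂ) (π : Polynomial ℂ)
    (hfrac : p = (∑ ℓ : Fin m₂, Polynomial.C (d ℓ) *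
        (Polynomial.C a * ∏ j ∈ Finset.univ.erase ℓ, (Polynomial.X - Polynomial.C (z j)))) +
      π * qq) :
    H - (Vᴴ * G) * (Vᴴ * F)ᴴ - (Polynomial.aeval H π)ᴴ =
      ∑ ℓ : Fin m₂, (starRingEnd ℂ) (d ℓ) • ((H - z ℓ • 1)⁻¹)ᴴ := by
  have hfacl : ∀ ℓ : Fin m₂, qq =
      (X - C (z ℓ)) * (C a * ∏ j ∈ Finset.univ.erase ℓ, (X - C (z j))) := by
    intro ℓ
    rw [hqfact, ← Finset.mul_prod_erase _ _ (Finset.mem_univ ℓ)]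
    ring
  have hfacl2 : ∀ ℓ : Fin m₂, qq =
      (C a * ∏ j ∈ Finset.univ.erase ℓ, (X - C (z j))) * (X - C (z ℓ)) := by
    intro ℓ; rw [hfacl ℓ]; ring
  have hUu : ∀ ℓ, IsUnit (aeval A (X - C (z ℓ))) := fun ℓ => isUnit_factor hqA (hfacl ℓ)
  have hUw : ∀ ℓ, IsUnit
      (aeval A (C a * ∏ j ∈ Finset.univ.erase ℓ, (X - C (z j)))) :=
    fun ℓ => isUnit_factor hqA (hfacl2 ℓ)
  have haevaluA : ∀ ℓ, aeval A (X - C (z ℓ)) = A - z ℓ • 1 := by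
    intro ℓ; simp [Algebra.algebraMap_eq_smul_one]
  have hdq : IsUnit (aeval A qq).det := (Matrix.isUnit_iff_isUnit_det _).mp hqA
  have hwinv : ∀ ℓ, aeval A (C a * ∏ j ∈ Finset.univ.erase ℓ, (X - C (z j))) *
      (aeval A qq)⁻¹ = (A - z ℓ • 1)⁻¹ := by
    intro ℓ
    have h1 : aeval A qq = aeval A (X - C (z ℓ)) *
        aeval A (C a * ∏ j ∈ Finset.univ.erase ℓ, (X - C (z j))) := by
      rw [hfacl ℓ, _root_.map_mul]
    rw [h1, Matrix.mul_inv_rev, ← Matrix.mul_assoc,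
      Matrix.mul_nonsing_inv _ ((Matrix.isUnit_iff_isUnit_det _).mp (hUw ℓ)),
      Matrix.one_mul, haevaluA]
  have hres : ∀ ℓ, (A - z ℓ • 1)⁻¹ * V = V * (H - z ℓ • 1)⁻¹ := by
    intro ℓ
    have h1 : (A - z ℓ • 1) * V = V * (H - z ℓ • 1) := by
      rw [Matrix.sub_mul, Matrix.mul_sub, hAV, Matrix.smul_mul, Matrix.one_mul,
        Matrix.mul_smul, Matrix.mul_one]
    have hdA : IsUnit (A - z ℓ • 1).det := by
      rw [← haevaluA ℓ]; exact (Matrix.isUnit_iff_isUnit_det _).mp (hUu ℓ)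
    have hdH : IsUnit (H - z ℓ • 1).det := (Matrix.isUnit_iff_isUnit_det _).mp (hzH ℓ)
    have h2 : ((A - z ℓ • 1)⁻¹ * V) * (H - z ℓ • 1) = V := by
      rw [Matrix.mul_assoc, ← h1, ← Matrix.mul_assoc, Matrix.nonsing_inv_mul _ hdA,
        Matrix.one_mul]
    conv_rhs => rw [← h2]
    rw [Matrix.mul_assoc, Matrix.mul_assoc, Matrix.mul_nonsing_inv _ hdH, Matrix.mul_one]
  have hp : aeval A p = (∑ ℓ, aeval A (C (d ℓ)) *
      aeval A (C a * ∏ j ∈ Finset.univ.erase ℓ, (X - C (z j)))) +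
      aeval A π * aeval A qq := by
    rw [hfrac]
    simp only [map_add, map_sum, _root_.map_mul]
  have hpq : aeval A p * (aeval A qq)⁻¹ = (∑ ℓ, d ℓ • (A - z ℓ • 1)⁻¹) + aeval A π := by
    rw [hp, Matrix.add_mul, Finset.sum_mul]
    congr 1
    · refine Finset.sum_congr rfl fun ℓ _ => ?_
      rw [Matrix.mul_assoc, hwinv ℓ, aeval_C, Algebra.algebraMap_eq_smul_one,
        Matrix.smul_mul, Matrix.one_mul]
    · rw [Matrix.mul_assoc, Matrix.mul_nonsing_inv _ hdq, Matrix.mul_one]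
  have hFG : Vᴴ * (F * Gᴴ) * V = (Vᴴ * F) * (Vᴴ * G)ᴴ := by
    rw [conjTranspose_mul, conjTranspose_conjTranspose]
    rw [← Matrix.mul_assoc, Matrix.mul_assoc (Vᴴ * F)]
  have hkey : Hᴴ = (∑ ℓ, d ℓ • (H - z ℓ • 1)⁻¹) + aeval H π + (Vᴴ * F) * (Vᴴ * G)ᴴ := by
    have hH : H = Vᴴ * A * V := by
      rw [Matrix.mul_assoc, hAV, ← Matrix.mul_assoc, hV, Matrix.one_mul]
    have hHad : Hᴴ = Vᴴ * Aᴴ * V := by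
      rw [hH, conjTranspose_mul, conjTranspose_mul, conjTranspose_conjTranspose,
        Matrix.mul_assoc]
    rw [hHad, hbml, Matrix.mul_add, Matrix.add_mul, hFG, hpq]
    congr 1
    rw [Matrix.mul_add, Matrix.add_mul, Matrix.mul_sum, Matrix.sum_mul]
    congr 1
    · refine Finset.sum_congr rfl fun ℓ _ => ?_
      rw [Matrix.mul_smul, Matrix.smul_mul, Matrix.mul_assoc, hres ℓ,
        ← Matrix.mul_assoc, hV, Matrix.one_mul]
    · rw [Matrix.mul_assoc, aeval_mul_V hAV, ← Matrix.mul_assoc, hV, Matrix.one_mul]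
  have hkey2 := congrArg conjTranspose hkey
  rw [conjTranspose_conjTranspose, conjTranspose_add, conjTranspose_add,
    conjTranspose_sum, conjTranspose_mul, conjTranspose_conjTranspose] at hkey2
  simp only [conjTranspose_smul] at hkey2
  rw [sub_sub, sub_eq_iff_eq_add]
  conv_lhs => rw [hkey2]
  simp only [starRingEnd_apply]
  abel

lemma entry_rec {N : ℕ} (hN : 1 ≤ N) (H : Matrix (Fin N) (Fin N) ℂ)
    (hHess : ∀ i j : Fin N, (j : ℕ) + 1 < (i : ℕ) → H i j = 0)
    (hsub : ∀ (k : ℕ) (hk : k + 1 < N),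
      0 < (H ⟨k + 1, hk⟩ ⟨k, Nat.lt_of_succ_lt hk⟩).re ∧
        (H ⟨k + 1, hk⟩ ⟨k, Nat.lt_of_succ_lt hk⟩).im = 0)
    (q : ℕ → Polynomial ℂ) (hq0 : q 0 = 1)
    (hqrec : ∀ (k : ℕ) (hk : k + 1 < N),
      Polynomial.C (H ⟨k + 1, hk⟩ ⟨k, Nat.lt_of_succ_lt hk⟩) * q (k + 1) =
        Polynomial.X * q k -
          ∑ j : Fin (k + 1),
            Polynomial.C (H ⟨(j : ℕ), Nat.lt_trans j.isLt hk⟩ ⟨k, Nat.lt_of_succ_lt hk⟩) *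
              q (j : ℕ))
    (zz : ℂ) (hz : IsUnit (H - zz • 1)) (j : Fin N) :
    ∀ (i : ℕ) (hij : i ≤ (j : ℕ)),
      (H - zz • 1)⁻¹ j ⟨i, lt_of_le_of_lt hij j.isLt⟩ =
        (q i).eval zz * (H - zz • 1)⁻¹ j ⟨0, hN⟩ := by
  set M := (H - zz • 1)⁻¹ with hM
  have hdH : IsUnit (H - zz • 1).det := (Matrix.isUnit_iff_isUnit_det _).mp hz
  have hinv : M * (H - zz • 1) = 1 := Matrix.nonsing_inv_mul _ hdH
  intro i
  induction i using Nat.strong_induction_on with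
  | _ i IH =>
    intro hij
    cases i with
    | zero => simp [hq0]
    | succ c =>
      have hc1N : c + 1 < N := lt_of_le_of_lt hij j.isLt
      set c' : Fin N := ⟨c, Nat.lt_of_succ_lt hc1N⟩ with hc'
      -- column-c relation
      have hjc : j ≠ c' := by
        intro h
        have : (j : ℕ) = c := by rw [h]
        omega
      have hentry := congrFun (congrFun hinv j) c'
      rw [Matrix.mul_apply, Matrix.one_apply_ne hjc] at hentry
      have h3 := hentry
      simp only [Matrix.sub_apply, Matrix.smul_apply, Matrix.one_apply, smul_eq_mul,
        mul_sub] at h3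
      have h2 : ∑ k : Fin N, M j k * (zz * (if k = c' then (1:ℂ) else 0)) = zz * M j c' := by
        have hterm : ∀ k : Fin N, M j k * (zz * (if k = c' then (1:ℂ) else 0)) =
            if k = c' then zz * M j c' else 0 := by
          intro k; by_cases h : k = c' <;> simp [h] <;> ring
        rw [Finset.sum_congr rfl fun k _ => hterm k,
          Finset.sum_ite_eq' Finset.univ c' fun _ => zz * M j c']
        simp
      rw [Finset.sum_sub_distrib, h2, sub_eq_zero] at h3
      -- h3 : ∑ k, M j k * H k c' = zz * M j c'
      set M0 := M j ⟨0, hN⟩ with hM0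
      set S : ℕ → ℂ := fun k => if h : k < N then M j ⟨k, h⟩ * H ⟨k, h⟩ c' else 0 with hS
      have hSsum : ∑ k : Fin N, M j k * H k c' = ∑ k ∈ Finset.range N, S k := by
        rw [← Fin.sum_univ_eq_sum_range]
        exact Finset.sum_congr rfl fun k _ => by simp [hS, k.isLt]
      have hrange : ∑ k ∈ Finset.range N, S k = ∑ k ∈ Finset.range (c + 2), S k := by
        refine (Finset.sum_subset (Finset.range_subset_range.mpr hc1N) ?_).symm
        intro k hk hk2
        have hk3 : c + 2 ≤ k := Nat.le_of_not_lt (by simp at hk2; omega)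
        have hkN : k < N := Finset.mem_range.mp hk
        rw [hS]
        simp only [dif_pos hkN]
        rw [hHess ⟨k, hkN⟩ c' (by show c + 1 < k; omega)]
        ring
      rw [Finset.sum_range_succ] at hrange
      set SF : ℂ := ∑ j' : Fin (c + 1),
        H ⟨(j' : ℕ), Nat.lt_trans j'.isLt hc1N⟩ ⟨c, Nat.lt_of_succ_lt hc1N⟩ *
          (q (j' : ℕ)).eval zz with hSF
      have e2 : ∑ k ∈ Finset.range (c + 1), S k = SF * M0 := by
        rw [hSF, Finset.sum_mul, ← Fin.sum_univ_eq_sum_range]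
        refine Finset.sum_congr rfl fun k _ => ?_
        have hkN : (k : ℕ) < N := Nat.lt_trans k.isLt hc1N
        have hkj : (k : ℕ) ≤ (j : ℕ) := le_trans (Nat.le_of_lt_succ k.isLt) (le_trans (Nat.le_succ c) hij)
        have hIH := IH (k : ℕ) (Nat.lt_of_lt_of_le k.isLt (Nat.le_refl (c+1))) hkj
        rw [hS]
        simp only [dif_pos hkN]
        rw [show (⟨(k : ℕ), hkN⟩ : Fin N) = ⟨(k : ℕ), lt_of_le_of_lt hkj j.isLt⟩ from rfl, hIH]
        ring
      have e3 : S (c + 1) = M j ⟨c + 1, hc1N⟩ * H ⟨c + 1, hc1N⟩ c' := by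
        rw [hS]; simp only [dif_pos hc1N]
      have heval := congrArg (Polynomial.eval zz) (hqrec c hc1N)
      simp only [eval_mul, eval_C, eval_X, eval_sub, eval_finset_sum] at heval
      -- heval : H_{c+1,c} * (q (c+1)).eval zz = zz * (q c).eval zz - SF
      have hIHc : M j c' = (q c).eval zz * M0 := by
        have := IH c (Nat.lt_succ_self c) (le_trans (Nat.le_succ c) hij)
        exact this
      have hcc : H ⟨c + 1, hc1N⟩ ⟨c, Nat.lt_of_succ_lt hc1N⟩ ≠ 0 := by
        intro h0
        have := (hsub c hc1N).1
        rw [h0] at this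
        simp at this
      have e1 : ∑ k ∈ Finset.range (c + 1), S k + S (c + 1) = zz * ((q c).eval zz * M0) := by
        rw [← hrange, ← hSsum, h3, hIHc]
      have goal' : H ⟨c + 1, hc1N⟩ ⟨c, Nat.lt_of_succ_lt hc1N⟩ * M j ⟨c + 1, hc1N⟩ =
          H ⟨c + 1, hc1N⟩ ⟨c, Nat.lt_of_succ_lt hc1N⟩ * ((q (c + 1)).eval zz * M0) := by
        rw [← hSF] at heval
        linear_combination e1 - e2 - e3 - heval * M0
      have := mul_left_cancel₀ hcc goal'
      exact this

/-- Under the BML and Arnoldi hypotheses, with the partial fraction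
decomposition `p/qq = Σ_ℓ d_ℓ/(z - z_ℓ) + π`, the part of
`H - G_N F_Nᴴ - π(H)ᴴ` on and above the main diagonal is given by
`Σ_ℓ conj(d_ℓ) conj(q_{i-1}(z_ℓ)) conj(((H - z_ℓ I)⁻¹)_{j,1})`
(`0`-based: row `i`, column `j`, `i ≤ j`). -/
theorem stmt14 (n N m₂ m₃ : ℕ) (hN : 1 ≤ N) (hNn : N ≤ n)
    (A : Matrix (Fin n) (Fin n) ℂ) (F G : Matrix (Fin n) (Fin m₃) ℂ)
    (p qq : Polynomial ℂ) (hqA : IsUnit (Polynomial.aeval A qq))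
    (z : Fin m₂ → ℂ) (hzinj : Function.Injective z) (a : ℂ) (ha : a ≠ 0)
    (hqfact : qq = Polynomial.C a * ∏ ℓ : Fin m₂, (Polynomial.X - Polynomial.C (z ℓ)))
    (hbml : Aᴴ = (Polynomial.aeval A p) * (Polynomial.aeval A qq)⁻¹ + F * Gᴴ)
    (b : Fin n → ℂ) (hb : b ≠ 0)
    (V : Matrix (Fin n) (Fin N) ℂ) (hV : Vᴴ * V = 1)
    (hv1 : (fun i => V i ⟨0, hN⟩) = (((nrm b)⁻¹ : ℝ) : ℂ) • b)
    (H : Matrix (Fin N) (Fin N) ℂ)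
    (hHess : ∀ i j : Fin N, (j : ℕ) + 1 < (i : ℕ) → H i j = 0)
    (hsub : ∀ (k : ℕ) (hk : k + 1 < N),
      0 < (H ⟨k + 1, hk⟩ ⟨k, Nat.lt_of_succ_lt hk⟩).re ∧
        (H ⟨k + 1, hk⟩ ⟨k, Nat.lt_of_succ_lt hk⟩).im = 0)
    (hAV : A * V = V * H)
    (hzH : ∀ ℓ : Fin m₂, IsUnit (H - z ℓ • 1))
    (d : Fin m₂ → ℂ) (π : Polynomial ℂ)
    (hfrac : p = (∑ ℓ : Fin m₂, Polynomial.C (d ℓ) *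
        (Polynomial.C a * ∏ j ∈ Finset.univ.erase ℓ, (Polynomial.X - Polynomial.C (z j)))) +
      π * qq)
    (q : ℕ → Polynomial ℂ) (hq0 : q 0 = 1)
    (hqrec : ∀ (k : ℕ) (hk : k + 1 < N),
      Polynomial.C (H ⟨k + 1, hk⟩ ⟨k, Nat.lt_of_succ_lt hk⟩) * q (k + 1) =
        Polynomial.X * q k -
          ∑ j : Fin (k + 1),
            Polynomial.C (H ⟨(j : ℕ), Nat.lt_trans j.isLt hk⟩ ⟨k, Nat.lt_of_succ_lt hk⟩) *
              q (j : ℕ))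
 :
    ∀ i j : Fin N, (i : ℕ) ≤ (j : ℕ) →
      (H - (Vᴴ * G) * (Vᴴ * F)ᴴ - (Polynomial.aeval H π)ᴴ) i j =
        ∑ ℓ : Fin m₂,
          (starRingEnd ℂ) (d ℓ) * (starRingEnd ℂ) ((q (i : ℕ)).eval (z ℓ)) *
            (starRingEnd ℂ) (((H - z ℓ • 1)⁻¹) j ⟨0, hN⟩) := by
  intro i j hij
  have hK := keylemma n N m₂ m₃ A F G p qq hqA z a hqfact hbml V hV H hAV hzH d π hfrac
  have hKe := congrFun (congrFun hK i) j
  rw [hKe, Matrix.sum_apply]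
  refine Finset.sum_congr rfl fun ℓ _ => ?_
  rw [Matrix.smul_apply, Matrix.conjTranspose_apply, smul_eq_mul]
  have h := entry_rec hN H hHess hsub q hq0 hqrec (z ℓ) (hzH ℓ) j (i : ℕ) hij
  rw [show (⟨(i : ℕ), lt_of_le_of_lt hij j.isLt⟩ : Fin N) = i from Fin.eta i _] at h
  rw [h, starRingEnd_apply, star_mul', mul_assoc]
  simp only [starRingEnd_apply]
end

section
/- Under the stated hypotheses, with m := max(0, deg p − deg q + 1), for every k with m < k ≤ N−1 there exist complex numbers a_{1,k}, …, a_{m₂,k} such that A·v_k − V_{k−m}·V_{k−m}^*·G·F^*·v_k = Σ_{ℓ=1}^{m₂} a_{ℓ,k}·w_{k−m−1}(z_ℓ) + Σ_{j=k−m+1}^{k+1} h_{j,k}·v_j, where the coefficients h_{j,k} are the corresponding entries of the Hessenberg matrix H_N. -/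
open Polynomial Matrix Finset

namespace StmtAux
variable {n m₂ : ℕ}

lemma inn_add_left (x y w : Fin n → ℂ) : inn (x + y) w = inn x w + inn y w := by
  simp [inn, add_mul, Finset.sum_add_distrib]

lemma inn_add_right (x y w : Fin n → ℂ) : inn x (y + w) = inn x y + inn x w := by
  simp [inn, mul_add, Finset.sum_add_distrib]

lemma inn_sub_right (x y w : Fin n → ℂ) : inn x (y - w) = inn x y - inn x w := by
  simp [inn, mul_sub, Finset.sum_sub_distrib]

lemma inn_sub_left (x y w : Fin n → ℂ) : inn (x - y) w = inn x w - inn y w := by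
  simp [inn, sub_mul, Finset.sum_sub_distrib]

lemma inn_smul_left (c : ℂ) (x y : Fin n → ℂ) : inn (c • x) y = (starRingEnd ℂ) c * inn x y := by
  simp [inn, Finset.mul_sum, mul_assoc]

lemma inn_smul_right (c : ℂ) (x y : Fin n → ℂ) : inn x (c • y) = c * inn x y := by
  simp [inn, Finset.mul_sum]; ring_nf
  exact Finset.sum_congr rfl fun i _ => by ring

lemma inn_zero_left (y : Fin n → ℂ) : inn 0 y = 0 := by simp [inn]

lemma inn_zero_right (x : Fin n → ℂ) : inn x 0 = 0 := by simp [inn]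

lemma inn_sum_left {ι : Type*} (s : Finset ι) (f : ι → Fin n → ℂ) (y : Fin n → ℂ) :
    inn (∑ i ∈ s, f i) y = ∑ i ∈ s, inn (f i) y := by
  classical
  induction s using Finset.induction with
  | empty => simp [inn_zero_left]
  | insert _ _ h ih => rw [Finset.sum_insert h, Finset.sum_insert h, inn_add_left, ih]

lemma inn_sum_right {ι : Type*} (s : Finset ι) (f : ι → Fin n → ℂ) (x : Fin n → ℂ) :
    inn x (∑ i ∈ s, f i) = ∑ i ∈ s, inn x (f i) := by
  classical
  induction s using Finset.induction with
  | empty => simp [inn_zero_right]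
  | insert _ _ h ih => rw [Finset.sum_insert h, Finset.sum_insert h, inn_add_right, ih]

lemma inn_mulVec_left (M : Matrix (Fin n) (Fin n) ℂ) (x y : Fin n → ℂ) :
    inn (M.mulVec x) y = inn x (Mᴴ.mulVec y) := by
  simp only [inn, Matrix.mulVec, dotProduct, Matrix.conjTranspose_apply, map_sum,
    Finset.sum_mul, Finset.mul_sum]
  rw [Finset.sum_comm]
  refine Finset.sum_congr rfl fun i _ => ?_
  refine Finset.sum_congr rfl fun j _ => ?_
  rw [RingHom.map_mul]
  simp only [RCLike.star_def]
  ring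

lemma inn_mulVec_right (M : Matrix (Fin n) (Fin n) ℂ) (x y : Fin n → ℂ) :
    inn x (M.mulVec y) = inn (Mᴴ.mulVec x) y := by
  rw [inn_mulVec_left, Matrix.conjTranspose_conjTranspose]

lemma inn_self_re (x : Fin n → ℂ) : (inn x x).re = ∑ i, Complex.normSq (x i) := by
  rw [inn, Complex.re_sum]
  refine Finset.sum_congr rfl fun i _ => ?_
  rw [mul_comm, Complex.mul_conj]
  simp

lemma inn_self_eq_zero {x : Fin n → ℂ} (h : inn x x = 0) : x = 0 := by
  have h2 : (inn x x).re = 0 := by rw [h]; simp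
  rw [inn_self_re] at h2
  funext i
  have := (Finset.sum_eq_zero_iff_of_nonneg (fun i _ => Complex.normSq_nonneg (x i))).mp h2 i (Finset.mem_univ i)
  simpa [Complex.normSq_eq_zero] using this

lemma nrm_ne_zero {x : Fin n → ℂ} (h : x ≠ 0) : nrm x ≠ 0 := by
  have hre : 0 < (inn x x).re := by
    rw [inn_self_re]
    rcases Function.ne_iff.mp h with ⟨i, hi⟩
    exact Finset.sum_pos' (fun j _ => Complex.normSq_nonneg (x j))
      ⟨i, Finset.mem_univ i, Complex.normSq_pos.mpr hi⟩
  exact ne_of_gt (Real.sqrt_pos.mpr hre)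

lemma nrm_smul_eq_self {x : Fin n → ℂ} (h : x ≠ 0) :
    ((nrm x : ℝ) : ℂ) • ((((nrm x)⁻¹ : ℝ) : ℂ) • x) = x := by
  have hre : 0 < (inn x x).re := by
    rw [inn_self_re]
    rcases Function.ne_iff.mp h with ⟨i, hi⟩
    exact Finset.sum_pos' (fun j _ => Complex.normSq_nonneg _) ⟨i, Finset.mem_univ i, Complex.normSq_pos.mpr hi⟩
  have : nrm x ≠ 0 := ne_of_gt (Real.sqrt_pos.mpr hre)
  rw [smul_smul, ← Complex.ofReal_mul, mul_inv_cancel₀ this]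
  simp

lemma inn_span_zero_left {s : Set (Fin n → ℂ)} {c : Fin n → ℂ}
    (h : ∀ t ∈ s, inn t c = 0) : ∀ y ∈ Submodule.span ℂ s, inn y c = 0 := by
  intro y hy
  induction hy using Submodule.span_induction with
  | mem t ht => exact h t ht
  | zero => exact inn_zero_left c
  | add a b _ _ ha hb => rw [inn_add_left, ha, hb, add_zero]
  | smul r a _ ha => rw [inn_smul_left, ha, mul_zero]



lemma sum_mulVec {ι : Type*} (s : Finset ι) (f : ι → Matrix (Fin n) (Fin n) ℂ) (x : Fin n → ℂ) :
    (∑ i ∈ s, f i).mulVec x = ∑ i ∈ s, (f i).mulVec x := by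
  classical
  induction s using Finset.induction with
  | empty => simp
  | insert _ _ h ih => rw [Finset.sum_insert h, Finset.sum_insert h, Matrix.add_mulVec, ih]

variable {n m₂ : ℕ}

lemma partial_fraction (A : Matrix (Fin n) (Fin n) ℂ) (p qq : Polynomial ℂ)
    (hqA : IsUnit (Polynomial.aeval A qq))
    (z : Fin m₂ → ℂ) (hzinj : Function.Injective z) (a : ℂ) (ha : a ≠ 0)
    (hqfact : qq = Polynomial.C a * ∏ ℓ : Fin m₂, (Polynomial.X - Polynomial.C (z ℓ)))
    (hzA : ∀ ℓ : Fin m₂, IsUnit (A - z ℓ • 1)) :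
    ∃ (s₁ : Polynomial ℂ) (γ : Fin m₂ → ℂ),
      Polynomial.aeval A p * (Polynomial.aeval A qq)⁻¹ =
        a⁻¹ • Polynomial.aeval A s₁ + ∑ ℓ : Fin m₂, γ ℓ • (A - z ℓ • 1)⁻¹ ∧
      (s₁ = 0 ∨ (m₂ ≤ p.natDegree ∧ s₁.natDegree + m₂ = p.natDegree)) := by
  classical
  set q₁ : Polynomial ℂ := ∏ ℓ : Fin m₂, (Polynomial.X - Polynomial.C (z ℓ)) with hq₁def
  have hq₁monic : q₁.Monic := monic_prod_of_monic _ _ fun i _ => monic_X_sub_C (z i)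
  have hq₁deg : q₁.natDegree = m₂ := by
    rw [hq₁def, natDegree_prod_of_monic _ _ fun i _ => monic_X_sub_C (z i)]
    simp
  set s₁ : Polynomial ℂ := p /ₘ q₁ with hs₁def
  set rem : Polynomial ℂ := p %ₘ q₁ with hremdef
  have hps : p = q₁ * s₁ + rem := by
    rw [hs₁def, hremdef, add_comm]; exact (modByMonic_add_div p q₁).symm
  have hremdeg : rem.degree < (m₂ : WithBot ℕ) := by
    have h1 := degree_modByMonic_lt p hq₁monic
    rwa [degree_eq_natDegree hq₁monic.ne_zero, hq₁deg] at h1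
  -- Lagrange interpolation of rem
  set Q : Fin m₂ → Polynomial ℂ :=
    fun ℓ => ∏ j ∈ Finset.univ.erase ℓ, (Polynomial.X - Polynomial.C (z j)) with hQdef
  set e : Fin m₂ → ℂ :=
    fun ℓ => rem.eval (z ℓ) * ∏ j ∈ Finset.univ.erase ℓ, (z ℓ - z j)⁻¹ with hedef
  have hrem2 : rem = ∑ ℓ : Fin m₂, Polynomial.C (e ℓ) * Q ℓ := by
    have hinj : Set.InjOn z ↑(Finset.univ : Finset (Fin m₂)) := hzinj.injOn
    have hcard : rem.degree < (#(Finset.univ : Finset (Fin m₂)) : ℕ) := by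
      simpa using hremdeg
    have h0 := Lagrange.eq_interpolate hinj hcard
    rw [Lagrange.interpolate_apply] at h0
    rw [h0]
    refine Finset.sum_congr rfl fun ℓ _ => ?_
    have hbasis : Lagrange.basis Finset.univ z ℓ =
        Polynomial.C (∏ j ∈ Finset.univ.erase ℓ, (z ℓ - z j)⁻¹) * Q ℓ := by
      rw [Lagrange.basis, hQdef]
      rw [show (fun j => Lagrange.basisDivisor (z ℓ) (z j)) = fun j =>
        Polynomial.C ((z ℓ - z j)⁻¹) * (Polynomial.X - Polynomial.C (z j)) from rfl]
      rw [Finset.prod_mul_distrib, ← map_prod]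
    rw [hbasis, ← mul_assoc, ← _root_.map_mul]
  -- matrix identities
  set QA : Matrix (Fin n) (Fin n) ℂ := Polynomial.aeval A qq with hQAdef
  have hdet : IsUnit QA.det := (Matrix.isUnit_iff_isUnit_det _).mp hqA
  have hQQ : QA * QA⁻¹ = 1 := Matrix.mul_nonsing_inv _ hdet
  have hQA2 : QA = a • Polynomial.aeval A q₁ := by
    rw [hQAdef, hqfact, _root_.map_mul, Polynomial.aeval_C, Algebra.smul_def]
  have hq1A : Polynomial.aeval A q₁ * QA⁻¹ = a⁻¹ • 1 := by
    have h1 : a • (Polynomial.aeval A q₁ * QA⁻¹) = 1 := by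
      rw [← smul_mul_assoc, ← hQA2, hQQ]
    calc Polynomial.aeval A q₁ * QA⁻¹
        = a⁻¹ • (a • (Polynomial.aeval A q₁ * QA⁻¹)) := by
          rw [smul_smul, inv_mul_cancel₀ ha, one_smul]
      _ = a⁻¹ • 1 := by rw [h1]
  have hXC : ∀ ℓ : Fin m₂, Polynomial.aeval A (Polynomial.X - Polynomial.C (z ℓ)) =
      A - z ℓ • 1 := by
    intro ℓ
    rw [map_sub, Polynomial.aeval_X, Polynomial.aeval_C, Algebra.algebraMap_eq_smul_one]
  have hQl : ∀ ℓ : Fin m₂, Polynomial.aeval A (Q ℓ) * QA⁻¹ = a⁻¹ • (A - z ℓ • 1)⁻¹ := by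
    intro ℓ
    have hq₁ℓ : q₁ = (Polynomial.X - Polynomial.C (z ℓ)) * Q ℓ :=
      (Finset.mul_prod_erase Finset.univ _ (Finset.mem_univ ℓ)).symm
    have h2 : (A - z ℓ • 1) * (Polynomial.aeval A (Q ℓ) * QA⁻¹) = a⁻¹ • 1 := by
      rw [← mul_assoc, ← hXC ℓ, ← _root_.map_mul, ← hq₁ℓ, hq1A]
    have hBdet : IsUnit (A - z ℓ • 1).det := (Matrix.isUnit_iff_isUnit_det _).mp (hzA ℓ)
    calc Polynomial.aeval A (Q ℓ) * QA⁻¹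
        = (A - z ℓ • 1)⁻¹ * ((A - z ℓ • 1) * (Polynomial.aeval A (Q ℓ) * QA⁻¹)) := by
          rw [← mul_assoc, Matrix.nonsing_inv_mul _ hBdet, one_mul]
      _ = a⁻¹ • (A - z ℓ • 1)⁻¹ := by rw [h2, mul_smul_comm, mul_one]
  refine ⟨s₁, fun ℓ => e ℓ * a⁻¹, ?_, ?_⟩
  · calc Polynomial.aeval A p * QA⁻¹
        = (Polynomial.aeval A q₁ * Polynomial.aeval A s₁ + Polynomial.aeval A rem) * QA⁻¹ := by
          conv_lhs => rw [hps]
          rw [map_add, _root_.map_mul]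
      _ = Polynomial.aeval A s₁ * (Polynomial.aeval A q₁ * QA⁻¹) +
            Polynomial.aeval A rem * QA⁻¹ := by
          rw [add_mul, ← _root_.map_mul, mul_comm q₁ s₁, _root_.map_mul, mul_assoc]
      _ = a⁻¹ • Polynomial.aeval A s₁ + ∑ ℓ : Fin m₂, (e ℓ * a⁻¹) • (A - z ℓ • 1)⁻¹ := by
          rw [hq1A, mul_smul_comm, mul_one]
          congr 1
          rw [hrem2, map_sum, Finset.sum_mul]
          refine Finset.sum_congr rfl fun ℓ _ => ?_
          rw [_root_.map_mul, Polynomial.aeval_C, ← Algebra.smul_def, smul_mul_assoc, hQl ℓ,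
            smul_smul]
  · by_cases hs : s₁ = 0
    · exact Or.inl hs
    · right
      have hdge : ¬ p.degree < q₁.degree := fun hlt =>
        hs ((divByMonic_eq_zero_iff hq₁monic).mpr hlt)
      have hle : q₁.natDegree ≤ p.natDegree := by
        have := le_of_not_gt hdge
        exact natDegree_le_natDegree this
      have hnd : s₁.natDegree = p.natDegree - q₁.natDegree := natDegree_divByMonic p hq₁monic
      constructor
      · omega
      · rw [hnd]; omega

end StmtAux

/-- For a BML-matrix `A` (`Aᴴ = p(A) qq(A)⁻¹ + F Gᴴ`, `qq` with
distinct simple roots `z_ℓ`, none an eigenvalue of `A`) and `m = max(0, deg p - deg qq + 1)`,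
for every `m < k ≤ N-1` there exist coefficients `a_ℓ` such that
`A v_k - V_{k-m} V_{k-m}^* G F^* v_k
  = Σ_ℓ a_ℓ w_{k-m-1}(z_ℓ) + Σ_{j=k-m+1}^{k+1} h_{j,k} v_j`
(`1`-based `k`; `0`-based, `v_k` is `v (k-1)` and `h_{j,k} = H (j-1) (k-1)`). -/
theorem stmt16 (n N m₂ m₃ : ℕ) (hN : 1 ≤ N) (hNn : N ≤ n)
    (A : Matrix (Fin n) (Fin n) ℂ) (b : Fin n → ℂ) (hb : b ≠ 0)
    (v : ℕ → Fin n → ℂ)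
    (horth : ∀ i j : ℕ, i < N → j < N → inn (v i) (v j) = if i = j then 1 else 0)
    (hv1 : v 0 = (((nrm b)⁻¹ : ℝ) : ℂ) • b)
    (H : Matrix (Fin N) (Fin N) ℂ)
    (hHess : ∀ i j : Fin N, (j : ℕ) + 1 < (i : ℕ) → H i j = 0)
    (hsub : ∀ (k : ℕ) (hk : k + 1 < N),
      0 < (H ⟨k + 1, hk⟩ ⟨k, Nat.lt_of_succ_lt hk⟩).re ∧
        (H ⟨k + 1, hk⟩ ⟨k, Nat.lt_of_succ_lt hk⟩).im = 0)
    (harn : ∀ (k : ℕ) (hk : k + 1 < N),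
      A.mulVec (v k) = ∑ j : Fin (k + 2),
        H ⟨(j : ℕ), Nat.lt_of_le_of_lt (Nat.lt_succ_iff.mp j.isLt) hk⟩
          ⟨k, Nat.lt_of_succ_lt hk⟩ • v (j : ℕ))
    (harnN : A.mulVec (v (N - 1)) =
      ∑ j : Fin N, H j ⟨N - 1, Nat.sub_lt hN Nat.one_pos⟩ • v (j : ℕ))
    (F G : Matrix (Fin n) (Fin m₃) ℂ)
    (p qq : Polynomial ℂ) (hqA : IsUnit (Polynomial.aeval A qq))
    (z : Fin m₂ → ℂ) (hzinj : Function.Injective z) (a : ℂ) (ha : a ≠ 0)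
    (hqfact : qq = Polynomial.C a * ∏ ℓ : Fin m₂, (Polynomial.X - Polynomial.C (z ℓ)))
    (hzA : ∀ ℓ : Fin m₂, IsUnit (A - z ℓ • 1))
    (hbml : Aᴴ = (Polynomial.aeval A p) * (Polynomial.aeval A qq)⁻¹ + F * Gᴴ)
    (m : ℕ) (hm : (m : ℤ) = max 0 ((p.natDegree : ℤ) - (qq.natDegree : ℤ) + 1))
    (u : ℂ → ℕ → Fin n → ℂ)
    (humem : ∀ (δ : ℂ) (k : ℕ), k < N →
      u δ k ∈ Submodule.span ℂ {x : Fin n → ℂ | ∃ j < k, x = (A - δ • 1).mulVec (v j)})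
    (huperp : ∀ (δ : ℂ) (k : ℕ), k < N →
      ∀ y ∈ Submodule.span ℂ {x : Fin n → ℂ | ∃ j < k, x = (A - δ • 1).mulVec (v j)},
        inn y (b - u δ k) = 0)
    (r : ℂ → ℕ → Fin n → ℂ) (hr : ∀ δ k, r δ k = b - u δ k)
    (hrne : ∀ (δ : ℂ) (k : ℕ), k < N → r δ k ≠ 0)
    (w : ℂ → ℕ → Fin n → ℂ) (hw : ∀ δ k, w δ k = (((nrm (r δ k))⁻¹ : ℝ) : ℂ) • r δ k)
 :
    ∀ (k : ℕ) (hmk : m < k) (hkN1 : k ≤ N - 1),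
      ∃ c : Fin m₂ → ℂ,
        A.mulVec (v (k - 1)) -
            ∑ i ∈ Finset.range (k - m),
              inn (v i) (G.mulVec (Fᴴ.mulVec (v (k - 1)))) • v i =
          (∑ ℓ : Fin m₂, c ℓ • w (z ℓ) (k - m - 1)) +
            ∑ t : Fin (m + 1),
              H ⟨k - m + (t : ℕ), by have := t.isLt; omega⟩
                  ⟨k - 1, by omega⟩ • v (k - m + (t : ℕ)) := by
    classical
  intro k hmk hkN1
  have hkN : k < N := by omega
  have hk1 : 1 ≤ k := by omega
  set K1 := k - m with hK1def
  have hK1pos : 1 ≤ K1 := by omega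
  have hK1le : K1 ≤ N - 1 := by omega
  have hqdeg : qq.natDegree = m₂ := by
    rw [hqfact, Polynomial.natDegree_C_mul ha,
      Polynomial.natDegree_prod_of_monic _ _ fun i _ => Polynomial.monic_X_sub_C _]
    simp
  -- Hessenberg entries as a total function
  set HH : ℕ → ℕ → ℂ := fun i j => if h : i < N ∧ j < N then H ⟨i, h.1⟩ ⟨j, h.2⟩ else 0
    with hHHdef
  have hHH_eq : ∀ (i j : ℕ) (hi : i < N) (hj : j < N), H ⟨i, hi⟩ ⟨j, hj⟩ = HH i j := by
    intro i j hi hj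
    simp only [hHHdef]
    rw [dif_pos ⟨hi, hj⟩]
  have harn' : ∀ kk, kk + 1 < N →
      A.mulVec (v kk) = ∑ j ∈ Finset.range (kk + 2), HH j kk • v j := by
    intro kk hk
    rw [harn kk hk, ← Fin.sum_univ_eq_sum_range (fun j => HH j kk • v j) (kk + 2)]
    refine Finset.sum_congr rfl fun j _ => ?_
    rw [hHH_eq]
  have hHne : ∀ kk, kk + 1 < N → HH (kk + 1) kk ≠ 0 := by
    intro kk hk h0
    have h1 := (hsub kk hk).1
    rw [hHH_eq _ _ hk (Nat.lt_of_succ_lt hk), h0] at h1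
    simp at h1
  -- extraction of coefficients via orthonormality
  have hext : ∀ (t : ℕ), t ≤ N → ∀ (c : ℕ → ℂ), ∀ i, i < t →
      inn (v i) (∑ j ∈ Finset.range t, c j • v j) = c i := by
    intro t ht c i hi
    rw [StmtAux.inn_sum_right, Finset.sum_eq_single i]
    · rw [StmtAux.inn_smul_right, horth i i (by omega) (by omega), if_pos rfl, mul_one]
    · intro j hj hne
      have hjt := Finset.mem_range.mp hj
      rw [StmtAux.inn_smul_right, horth i j (by omega) (by omega), if_neg (by omega), mul_zero]
    · intro hcon
      exact absurd (Finset.mem_range.mpr hi) hcon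
  -- Krylov subspaces
  set W : ℕ → Submodule ℂ (Fin n → ℂ) := fun t => Submodule.span ℂ (v '' {i | i < t})
    with hWdef
  have hvW : ∀ j t : ℕ, j < t → v j ∈ W t := fun j t hj =>
    Submodule.subset_span ⟨j, hj, rfl⟩
  have hWmono : ∀ s t : ℕ, s ≤ t → W s ≤ W t := fun s t hst =>
    Submodule.span_mono (Set.image_mono fun i hi => lt_of_lt_of_le hi hst)
  have hWA : ∀ t, t + 1 ≤ N → ∀ x ∈ W t, A.mulVec x ∈ W (t + 1) := by
    intro t ht x hx
    induction hx using Submodule.span_induction with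
    | mem s hs =>
        obtain ⟨i, hi, rfl⟩ := hs
        have hi' : i < t := hi
        have hiN : i + 1 < N := by omega
        rw [harn' i hiN]
        refine Submodule.sum_mem _ fun j hj => Submodule.smul_mem _ _ (hvW j _ ?_)
        have := Finset.mem_range.mp hj
        omega
    | zero => rw [Matrix.mulVec_zero]; exact Submodule.zero_mem _
    | add x1 x2 _ _ h1 h2 => rw [Matrix.mulVec_add]; exact Submodule.add_mem _ h1 h2
    | smul c x1 _ h1 => rw [Matrix.mulVec_smul]; exact Submodule.smul_mem _ _ h1
  have hWpow : ∀ (i j : ℕ), j + i + 1 ≤ N → (A ^ i).mulVec (v j) ∈ W (j + i + 1) := by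
    intro i
    induction i with
    | zero =>
        intro j hj
        rw [pow_zero, Matrix.one_mulVec]
        exact hvW j _ (by omega)
    | succ i ih =>
        intro j hj
        rw [pow_succ', ← Matrix.mulVec_mulVec]
        have h1 := hWA (j + i + 1) (by omega) _ (ih j (by omega))
        exact hWmono _ _ (by omega) h1
  have hWpoly : ∀ (f : Polynomial ℂ) (j : ℕ), j + f.natDegree + 1 ≤ N →
      (Polynomial.aeval A f).mulVec (v j) ∈ W (j + f.natDegree + 1) := by
    intro f j hj
    rw [Polynomial.aeval_eq_sum_range, StmtAux.sum_mulVec]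
    refine Submodule.sum_mem _ fun i hi => ?_
    have hi' := Finset.mem_range.mp hi
    rw [Matrix.smul_mulVec]
    refine Submodule.smul_mem _ _ (hWmono _ _ (by omega) (hWpow i j (by omega)))
  have hWorth : ∀ t, t ≤ k - 1 → ∀ x ∈ W t, inn x (v (k - 1)) = 0 := by
    intro t ht x hx
    refine StmtAux.inn_span_zero_left ?_ x hx
    rintro s ⟨i, hi, rfl⟩
    have hi' : i < t := hi
    rw [horth i (k - 1) (by omega) (by omega), if_neg (by omega)]
  -- partial fractions
  obtain ⟨s₁, γ, hpf, hs₁deg⟩ :=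
    StmtAux.partial_fraction A p qq hqA z hzinj a ha hqfact hzA
  have hS₁coef : ∀ j, j < K1 → inn ((Polynomial.aeval A s₁).mulVec (v j)) (v (k - 1)) = 0 := by
    intro j hj
    rcases hs₁deg with h0 | ⟨hm₂le, hdeg⟩
    · rw [h0, map_zero, Matrix.zero_mulVec, StmtAux.inn_zero_left]
    · have hmax : (0 : ℤ) ≤ (p.natDegree : ℤ) - (qq.natDegree : ℤ) + 1 := by
        rw [hqdeg]; omega
      rw [max_eq_right hmax, hqdeg] at hm
      have hdm : s₁.natDegree + 1 = m := by omega
      have hle1 : j + s₁.natDegree + 1 ≤ k - 1 := by omega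
      exact hWorth _ hle1 _ (hWpoly s₁ j (by omega))
  -- the vectors y ℓ
  set y : Fin m₂ → (Fin n → ℂ) := fun ℓ => ((A - z ℓ • 1)⁻¹)ᴴ.mulVec (v (k - 1)) with hydef
  -- Arnoldi expansion of A v_{k-1}
  have hAv : A.mulVec (v (k - 1)) = ∑ j ∈ Finset.range (k + 1), HH j (k - 1) • v j := by
    have h := harn' (k - 1) (by omega)
    rwa [show k - 1 + 2 = k + 1 by omega] at h
  have hHHval : ∀ j, j < k + 1 → HH j (k - 1) = inn (v j) (A.mulVec (v (k - 1))) := by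
    intro j hj
    rw [hAv, hext (k + 1) (by omega) _ j hj]
  -- the coefficients d j
  set d : ℕ → ℂ := fun j => HH j (k - 1) - inn (v j) (G.mulVec (Fᴴ.mulVec (v (k - 1))))
    with hddef
  have hd : ∀ j, j < K1 →
      d j = ∑ ℓ : Fin m₂, (starRingEnd ℂ) (γ ℓ) * inn (v j) (y ℓ) := by
    intro j hj
    have e1 : d j = inn (v j) ((A - G * Fᴴ).mulVec (v (k - 1))) := by
      simp only [hddef]
      rw [hHHval j (by omega), Matrix.sub_mulVec, StmtAux.inn_sub_right,
        Matrix.mulVec_mulVec]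
    have hCT : (A - G * Fᴴ)ᴴ = Polynomial.aeval A p * (Polynomial.aeval A qq)⁻¹ := by
      rw [Matrix.conjTranspose_sub, Matrix.conjTranspose_mul,
        Matrix.conjTranspose_conjTranspose, hbml, add_sub_cancel_right]
    rw [e1, StmtAux.inn_mulVec_right, hCT, hpf, Matrix.add_mulVec, StmtAux.inn_add_left,
      Matrix.smul_mulVec, StmtAux.inn_smul_left, hS₁coef j hj, mul_zero, zero_add,
      StmtAux.sum_mulVec, StmtAux.inn_sum_left]
    refine Finset.sum_congr rfl fun ℓ _ => ?_
    rw [Matrix.smul_mulVec, StmtAux.inn_smul_left, StmtAux.inn_mulVec_left]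
  -- projection is a multiple of the residual
  have hproj : ∀ ℓ : Fin m₂, ∃ gval : ℂ,
      (∑ j ∈ Finset.range K1, inn (v j) (y ℓ) • v j) = gval • r (z ℓ) (K1 - 1) := by
    intro ℓ
    have hdetB : IsUnit (A - z ℓ • 1).det := (Matrix.isUnit_iff_isUnit_det _).mp (hzA ℓ)
    have hyinv : (A - z ℓ • 1)ᴴ.mulVec (y ℓ) = v (k - 1) := by
      simp only [hydef]
      rw [Matrix.mulVec_mulVec, ← Matrix.conjTranspose_mul,
        Matrix.nonsing_inv_mul _ hdetB, Matrix.conjTranspose_one, Matrix.one_mulVec]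
    have hgen_y : ∀ i, i < K1 - 1 → inn ((A - z ℓ • 1).mulVec (v i)) (y ℓ) = 0 := by
      intro i hi
      rw [StmtAux.inn_mulVec_left, hyinv,
        horth i (k - 1) (by omega) (by omega), if_neg (by omega)]
    set Py : Fin n → ℂ := ∑ j ∈ Finset.range K1, inn (v j) (y ℓ) • v j with hPydef
    have hPyt : ∀ t, t < K1 → inn (v t) Py = inn (v t) (y ℓ) := by
      intro t htK
      rw [hPydef, hext K1 (by omega) _ t htK]
    set Sset : Set (Fin n → ℂ) :=
      {x | ∃ j < K1 - 1, x = (A - z ℓ • 1).mulVec (v j)} with hSsetdef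
    have hgen_Py : ∀ s ∈ Sset, inn s Py = 0 := by
      rintro s ⟨i, hi, rfl⟩
      have hiN : i + 1 < N := by omega
      have hs : (A - z ℓ • 1).mulVec (v i)
          = (∑ j' ∈ Finset.range (i + 2), HH j' i • v j') - z ℓ • v i := by
        rw [Matrix.sub_mulVec, harn' i hiN, Matrix.smul_mulVec, Matrix.one_mulVec]
      have key : inn ((A - z ℓ • 1).mulVec (v i)) Py
          = inn ((A - z ℓ • 1).mulVec (v i)) (y ℓ) := by
        rw [hs, StmtAux.inn_sub_left, StmtAux.inn_sub_left, StmtAux.inn_sum_left,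
          StmtAux.inn_sum_left, StmtAux.inn_smul_left, StmtAux.inn_smul_left]
        congr 1
        · refine Finset.sum_congr rfl fun t ht => ?_
          have ht' := Finset.mem_range.mp ht
          rw [StmtAux.inn_smul_left, StmtAux.inn_smul_left, hPyt t (by omega)]
        · rw [hPyt i (by omega)]
      rw [key]
      exact hgen_y i hi
    -- every v j (j < K1) lies in span (b :: Sset)
    have hbS : ∀ j, j < K1 → v j ∈ Submodule.span ℂ ({b} ∪ Sset) := by
      intro j
      induction j using Nat.strong_induction_on with
      | _ j ih =>
        intro hj
        cases j with
        | zero =>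
            rw [hv1]
            exact Submodule.smul_mem _ _ (Submodule.subset_span (Or.inl rfl))
        | succ jj =>
            have hjN : jj + 1 < N := by omega
            have hHnejj := hHne jj hjN
            have hAvj : A.mulVec (v jj)
                = (∑ j' ∈ Finset.range (jj + 1), HH j' jj • v j') + HH (jj + 1) jj • v (jj + 1) := by
              rw [harn' jj hjN, Finset.sum_range_succ]
            have hv : v (jj + 1) = (HH (jj + 1) jj)⁻¹ •
                (A.mulVec (v jj) - ∑ j' ∈ Finset.range (jj + 1), HH j' jj • v j') := by
              rw [hAvj, add_sub_cancel_left, smul_smul, inv_mul_cancel₀ hHnejj, one_smul]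
            have hAmem : A.mulVec (v jj) ∈ Submodule.span ℂ ({b} ∪ Sset) := by
              have hdecomp : A.mulVec (v jj) = (A - z ℓ • 1).mulVec (v jj) + z ℓ • v jj := by
                rw [Matrix.sub_mulVec, Matrix.smul_mulVec, Matrix.one_mulVec]
                abel
              rw [hdecomp]
              refine Submodule.add_mem _ ?_ ?_
              · exact Submodule.subset_span (Or.inr ⟨jj, by omega, rfl⟩)
              · exact Submodule.smul_mem _ _ (ih jj (by omega) (by omega))
            rw [hv]
            refine Submodule.smul_mem _ _ (Submodule.sub_mem _ hAmem ?_)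
            refine Submodule.sum_mem _ fun t ht => ?_
            have ht' := Finset.mem_range.mp ht
            exact Submodule.smul_mem _ _ (ih t (by omega) (by omega))
    have hPymem : Py ∈ Submodule.span ℂ ({b} ∪ Sset) := by
      rw [hPydef]
      exact Submodule.sum_mem _ fun j hj =>
        Submodule.smul_mem _ _ (hbS j (Finset.mem_range.mp hj))
    rw [Submodule.span_union, Submodule.mem_sup] at hPymem
    obtain ⟨xb, hxb, xs, hxs, hx⟩ := hPymem
    obtain ⟨gval, rfl⟩ := Submodule.mem_span_singleton.mp hxb
    refine ⟨gval, ?_⟩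
    have ht0N : K1 - 1 < N := by omega
    have hrval : r (z ℓ) (K1 - 1) = b - u (z ℓ) (K1 - 1) := hr _ _
    have humem' := humem (z ℓ) (K1 - 1) ht0N
    have hD : Py - gval • r (z ℓ) (K1 - 1) ∈ Submodule.span ℂ Sset := by
      rw [hrval, ← hx]
      have heq : gval • b + xs - gval • (b - u (z ℓ) (K1 - 1))
          = xs + gval • u (z ℓ) (K1 - 1) := by
        rw [smul_sub]
        abel
      rw [heq]
      exact Submodule.add_mem _ hxs (Submodule.smul_mem _ _ humem')
    have hDPy : inn (Py - gval • r (z ℓ) (K1 - 1)) Py = 0 :=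
      StmtAux.inn_span_zero_left hgen_Py _ hD
    have hDr : inn (Py - gval • r (z ℓ) (K1 - 1)) (r (z ℓ) (K1 - 1)) = 0 := by
      have h2 := huperp (z ℓ) (K1 - 1) ht0N _ hD
      rwa [← hrval] at h2
    have hDD : inn (Py - gval • r (z ℓ) (K1 - 1)) (Py - gval • r (z ℓ) (K1 - 1)) = 0 := by
      rw [StmtAux.inn_sub_right, hDPy, StmtAux.inn_smul_right, hDr, mul_zero, sub_zero]
    have hfin := StmtAux.inn_self_eq_zero hDD
    exact sub_eq_zero.mp hfin
  choose g hg using hproj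
  refine ⟨fun ℓ => (starRingEnd ℂ) (γ ℓ) *
    (g ℓ * ((nrm (r (z ℓ) (K1 - 1)) : ℝ) : ℂ)), ?_⟩
  -- final assembly
  have hX : ∑ j ∈ Finset.range K1, d j • v j
      = ∑ ℓ : Fin m₂, ((starRingEnd ℂ) (γ ℓ) *
          (g ℓ * ((nrm (r (z ℓ) (K1 - 1)) : ℝ) : ℂ))) • w (z ℓ) (K1 - 1) := by
    calc ∑ j ∈ Finset.range K1, d j • v j
        = ∑ j ∈ Finset.range K1, ∑ ℓ : Fin m₂,
            ((starRingEnd ℂ) (γ ℓ) * inn (v j) (y ℓ)) • v j := by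
          refine Finset.sum_congr rfl fun j hj => ?_
          rw [hd j (Finset.mem_range.mp hj), Finset.sum_smul]
      _ = ∑ ℓ : Fin m₂, (starRingEnd ℂ) (γ ℓ) •
            ∑ j ∈ Finset.range K1, inn (v j) (y ℓ) • v j := by
          rw [Finset.sum_comm]
          refine Finset.sum_congr rfl fun ℓ _ => ?_
          rw [Finset.smul_sum]
          refine Finset.sum_congr rfl fun j _ => ?_
          rw [smul_smul]
      _ = ∑ ℓ : Fin m₂, ((starRingEnd ℂ) (γ ℓ) *
            (g ℓ * ((nrm (r (z ℓ) (K1 - 1)) : ℝ) : ℂ))) • w (z ℓ) (K1 - 1) := by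
          refine Finset.sum_congr rfl fun ℓ _ => ?_
          have hnz : ((nrm (r (z ℓ) (K1 - 1)) : ℝ) : ℂ) ≠ 0 :=
            Complex.ofReal_ne_zero.mpr
              (StmtAux.nrm_ne_zero (hrne (z ℓ) (K1 - 1) (by omega)))
          rw [hg ℓ, hw, smul_smul, smul_smul, Complex.ofReal_inv]
          congr 1
          field_simp
  simp only [hHH_eq]
  rw [Fin.sum_univ_eq_sum_range (fun t => HH (K1 + t) (k - 1) • v (K1 + t)) (m + 1)]
  rw [hAv, show k + 1 = K1 + (m + 1) by omega,
    Finset.sum_range_add (fun j => HH j (k - 1) • v j) K1 (m + 1)]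
  rw [add_sub_right_comm]
  congr 1
  rw [← hX]
  rw [← Finset.sum_sub_distrib]
  refine Finset.sum_congr rfl fun j hj => ?_
  rw [← sub_smul]
end
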